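/- arXiv:1802.06141 — 8 statements merged into one kernel-verified Lean document; each statement's English description precedes it below -/
import Mathlib

section
/- Let C be a finite quotienting lattice of languages over A and let ≤_C be its canonical preorder. Let ∼ be the equivalence generated by ≤_C (u ∼ v iff u ≤_C v and v ≤_C u). Then ∼ is a congruence of finite index on A*, and consequently there exists p ≥ 1 such that for all m, m' ≥ 1 and all words w, w^{pm} ≤_C w^{pm'}. -/
/-- The canonical preorder `≤_C` on words. -/
def leC {A : Type} (C : Set (Set (List A))) (u v : List A) : Prop :=
  ∀ L ∈ C, u ∈ L → v ∈ L

/-- The equivalence generated by `≤_C`. -/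
def eqvC {A : Type} (C : Set (Set (List A))) (u v : List A) : Prop :=
  leC C u v ∧ leC C v u

/-- `n`-th power of a word in the free monoid: `w^n`. -/
def wpow {A : Type} (w : List A) (n : ℕ) : List A :=
  (List.replicate n w).flatten

lemma leC_refl {A : Type} (C : Set (Set (List A))) (u : List A) : leC C u u :=
  fun _ _ h => h

lemma leC_trans {A : Type} {C : Set (Set (List A))} {u v w : List A}
    (h1 : leC C u v) (h2 : leC C v w) : leC C u w :=
  fun L hL hu => h2 L hL (h1 L hL hu)

lemma eqvC_refl {A : Type} (C : Set (Set (List A))) (u : List A) : eqvC C u u :=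
  ⟨leC_refl C u, leC_refl C u⟩

lemma eqvC_trans {A : Type} {C : Set (Set (List A))} {u v w : List A}
    (h1 : eqvC C u v) (h2 : eqvC C v w) : eqvC C u w :=
  ⟨leC_trans h1.1 h2.1, leC_trans h2.2 h1.2⟩

lemma leC_append {A : Type} {C : Set (Set (List A))}
    (hql : ∀ L ∈ C, ∀ u : List A, {w : List A | u ++ w ∈ L} ∈ C)
    (hqr : ∀ L ∈ C, ∀ u : List A, {w : List A | w ++ u ∈ L} ∈ C)
    {u u' v v' : List A} (h1 : leC C u u') (h2 : leC C v v') :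
    leC C (u ++ v) (u' ++ v') := by
  intro L hL huv
  have h3 : u ++ v' ∈ L := h2 _ (hql L hL u) huv
  exact h1 _ (hqr L hL v') h3

lemma eqvC_append {A : Type} {C : Set (Set (List A))}
    (hql : ∀ L ∈ C, ∀ u : List A, {w : List A | u ++ w ∈ L} ∈ C)
    (hqr : ∀ L ∈ C, ∀ u : List A, {w : List A | w ++ u ∈ L} ∈ C)
    {u u' v v' : List A} (h1 : eqvC C u u') (h2 : eqvC C v v') :
    eqvC C (u ++ v) (u' ++ v') :=
  ⟨leC_append hql hqr h1.1 h2.1, leC_append hql hqr h1.2 h2.2⟩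

/-- The "type" of a word: the set of languages of `C` containing it. -/
def tauC {A : Type} (C : Set (Set (List A))) (u : List A) : Set (Set (List A)) :=
  {L | L ∈ C ∧ u ∈ L}

lemma leC_iff_tau {A : Type} (C : Set (Set (List A))) (u v : List A) :
    leC C u v ↔ tauC C u ⊆ tauC C v := by
  constructor
  · rintro h L ⟨hL, hu⟩; exact ⟨hL, h L hL hu⟩
  · intro h L hL hu; exact (h ⟨hL, hu⟩).2

lemma eqvC_iff_tau {A : Type} (C : Set (Set (List A))) (u v : List A) :
    eqvC C u v ↔ tauC C u = tauC C v := by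
  rw [eqvC, leC_iff_tau, leC_iff_tau, Set.Subset.antisymm_iff]

lemma wpow_add {A : Type} (w : List A) (a b : ℕ) :
    wpow w (a + b) = wpow w a ++ wpow w b := by
  rw [wpow, wpow, wpow, List.replicate_add, List.flatten_append]

theorem stmt_2 {A : Type} (C : Set (Set (List A)))
    (hfin : C.Finite)
    (hempty : (∅ : Set (List A)) ∈ C) (huniv : (Set.univ : Set (List A)) ∈ C)
    (hunion : ∀ K L : Set (List A), K ∈ C → L ∈ C → K ∪ L ∈ C)
    (hinter : ∀ K L : Set (List A), K ∈ C → L ∈ C → K ∩ L ∈ C)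
    (hql : ∀ L ∈ C, ∀ u : List A, {w : List A | u ++ w ∈ L} ∈ C)
    (hqr : ∀ L ∈ C, ∀ u : List A, {w : List A | w ++ u ∈ L} ∈ C) :
    -- `∼` is a congruence
    (∀ u u' v v' : List A, eqvC C u u' → eqvC C v v' → eqvC C (u ++ v) (u' ++ v')) ∧
    -- of finite index
    {S : Set (List A) | ∃ u : List A, S = {v : List A | eqvC C u v}}.Finite ∧
    -- consequently there is `p ≥ 1` with `w^{pm} ≤_C w^{pm'}` for all `m, m' ≥ 1`
    (∃ p : ℕ, 1 ≤ p ∧ ∀ m m' : ℕ, 1 ≤ m → 1 ≤ m' → ∀ w : List A,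
      leC C (wpow w (p * m)) (wpow w (p * m'))) := by
  classical
  refine ⟨fun u u' v v' h1 h2 => eqvC_append hql hqr h1 h2, ?_, ?_⟩
  · -- finite index
    have hsub : {S : Set (List A) | ∃ u : List A, S = {v : List A | eqvC C u v}} ⊆
        (fun T => {v : List A | tauC C v = T}) '' {T | T ⊆ C} := by
      rintro S ⟨u, rfl⟩
      refine ⟨tauC C u, fun L hL => hL.1, ?_⟩
      ext v
      simp only [Set.mem_setOf_eq, eqvC_iff_tau]
      exact eq_comm
    exact (hfin.finite_subsets.image _).subset hsub
  · -- existence of p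
    set TF : Finset (Set (Set (List A))) := hfin.finite_subsets.toFinset with hTF
    set N : ℕ := TF.card with hN
    refine ⟨N.factorial, N.factorial_pos, ?_⟩
    intro m m' hm hm' w
    -- pigeonhole on the types of powers of w
    have hmaps : ∀ n ∈ Finset.range (N + 1), tauC C (wpow w n) ∈ TF := by
      intro n _
      rw [hTF, Set.Finite.mem_toFinset]
      exact fun L hL => hL.1
    obtain ⟨i, hi, j, hj, hne, heq⟩ :=
      Finset.exists_ne_map_eq_of_card_lt_of_maps_to (by simp [hN]) hmaps
    have key : ∃ i c : ℕ, i ≤ N ∧ 1 ≤ c ∧ c ≤ N ∧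
        eqvC C (wpow w i) (wpow w (i + c)) := by
      rw [Finset.mem_range] at hi hj
      rcases Ne.lt_or_gt hne with h | h
      · refine ⟨i, j - i, by omega, by omega, by omega, ?_⟩
        have : i + (j - i) = j := by omega
        rw [this, eqvC_iff_tau]
        exact heq
      · refine ⟨j, i - j, by omega, by omega, by omega, ?_⟩
        have : j + (i - j) = i := by omega
        rw [this, eqvC_iff_tau]
        exact heq.symm
    obtain ⟨a, c, haN, hc1, hcN, hac⟩ := key
    -- eqvC w^a w^{a + k*c} for all k
    have hk : ∀ k : ℕ, eqvC C (wpow w a) (wpow w (a + k * c)) := by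
      intro k
      induction k with
      | zero => simpa using eqvC_refl C (wpow w a)
      | succ k ih =>
        have step := eqvC_append hql hqr hac (eqvC_refl C (wpow w (k * c)))
        rw [← wpow_add, ← wpow_add] at step
        have e : a + c + k * c = a + (k + 1) * c := by ring
        rw [e] at step
        exact eqvC_trans ih step
    -- eqvC w^b w^{b + t*c} for all b ≥ a
    have gen : ∀ b t : ℕ, a ≤ b → eqvC C (wpow w b) (wpow w (b + t * c)) := by
      intro b t hb
      have h1 := eqvC_append hql hqr (hk t) (eqvC_refl C (wpow w (b - a)))
      rw [← wpow_add, ← wpow_add] at h1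
      have e1 : a + (b - a) = b := by omega
      have e2 : a + t * c + (b - a) = b + t * c := by omega
      rw [e1, e2] at h1
      exact h1
    have hcp : c ∣ N.factorial := Nat.dvd_factorial hc1 hcN
    have hap : a ≤ N.factorial := le_trans haN (Nat.self_le_factorial N)
    -- eqvC w^p w^{p*m} for every m ≥ 1
    have main : ∀ m : ℕ, 1 ≤ m →
        eqvC C (wpow w N.factorial) (wpow w (N.factorial * m)) := by
      intro m hm
      obtain ⟨k, rfl⟩ := Nat.exists_eq_add_of_le hm
      have hdvd : c ∣ N.factorial * k := hcp.mul_right k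
      have h1 := gen N.factorial (N.factorial * k / c) hap
      rw [Nat.div_mul_cancel hdvd] at h1
      have e : N.factorial + N.factorial * k = N.factorial * (1 + k) := by ring
      rw [e] at h1
      exact h1
    exact leC_trans ((main m hm).2) ((main m' hm').1)
end

section
/- Let C be a quotienting lattice of regular languages over A, M a finite monoid, and α : A* → M a surjective morphism. If (s₁,t₁) and (s₂,t₂) are C-pairs for α, then (s₁s₂, t₁t₂) is a C-pair for α. -/
/-- A language is regular when it is accepted by a DFA with finitely many states. -/
def IsReg {A : Type} (L : Set (List A)) : Prop :=
  ∃ (σ : Type) (_ : Fintype σ) (dfa : DFA A σ), ∀ w : List A, w ∈ dfa.accepts ↔ w ∈ L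

/-- `(s,t)` is a `C`-pair for `α`: `α⁻¹(s)` is not `C`-separable from `α⁻¹(t)`. -/
def CPair {A M : Type} (C : Set (Set (List A))) (α : List A → M) (s t : M) : Prop :=
  ¬ ∃ K ∈ C, α ⁻¹' {s} ⊆ K ∧ K ∩ α ⁻¹' {t} = ∅

theorem stmt_4 {A M : Type} [Monoid M] [Fintype M]
    (C : Set (Set (List A)))
    (hreg : ∀ K ∈ C, IsReg K)
    (hempty : (∅ : Set (List A)) ∈ C) (huniv : (Set.univ : Set (List A)) ∈ C)
    (hunion : ∀ K L : Set (List A), K ∈ C → L ∈ C → K ∪ L ∈ C)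
    (hinter : ∀ K L : Set (List A), K ∈ C → L ∈ C → K ∩ L ∈ C)
    (hql : ∀ L ∈ C, ∀ u : List A, {w : List A | u ++ w ∈ L} ∈ C)
    (hqr : ∀ L ∈ C, ∀ u : List A, {w : List A | w ++ u ∈ L} ∈ C)
    (α : List A → M)
    (hone : α [] = 1) (hmul : ∀ u v : List A, α (u ++ v) = α u * α v)
    (hsurj : Function.Surjective α)
    (s₁ t₁ s₂ t₂ : M) (h1 : CPair C α s₁ t₁) (h2 : CPair C α s₂ t₂) :
    CPair C α (s₁ * s₂) (t₁ * t₂) := by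
  rintro ⟨K, hKC, hK1, hK2⟩
  obtain ⟨σ, _, dfa, hdfa⟩ := hreg K hKC
  classical
  set S : Set (List A) := α ⁻¹' {s₁} with hS
  have key : ∀ u u' w : List A, dfa.eval u = dfa.eval u' → (u ++ w ∈ K ↔ u' ++ w ∈ K) := by
    intro u u' w h
    rw [← hdfa, ← hdfa, DFA.mem_accepts, DFA.mem_accepts]
    show dfa.evalFrom dfa.start (u ++ w) ∈ _ ↔ dfa.evalFrom dfa.start (u' ++ w) ∈ _
    rw [DFA.evalFrom_of_append, DFA.evalFrom_of_append]
    exact iff_of_eq (congrArg _ (congrFun (congrArg _ h) w))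
  let g : σ → Set (List A) := fun q =>
    if h : ∃ u, u ∈ S ∧ dfa.eval u = q then {w | h.choose ++ w ∈ K} else Set.univ
  have hgC : ∀ q, g q ∈ C := by
    intro q
    by_cases h : ∃ u, u ∈ S ∧ dfa.eval u = q
    · simpa [g, h] using hql K hKC h.choose
    · simpa [g, h] using huniv
  have hInter : ∀ F : Finset σ, (⋂ q ∈ F, g q) ∈ C := by
    intro F
    induction F using Finset.induction with
    | empty => simpa using huniv
    | insert _ _ h ih => rw [Finset.set_biInter_insert]; exact hinter _ _ (hgC _) ih
  set K₂ : Set (List A) := ⋂ q ∈ (Finset.univ : Finset σ), g q with hK₂def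
  have hK₂C : K₂ ∈ C := hInter _
  have hsub2 : α ⁻¹' {s₂} ⊆ K₂ := by
    intro w hw
    simp only [hK₂def, Set.mem_iInter]
    intro q _
    by_cases h : ∃ u, u ∈ S ∧ dfa.eval u = q
    · have hu := h.choose_spec.1
      have : α (h.choose ++ w) = s₁ * s₂ := by
        rw [hmul]
        have h1' : α h.choose = s₁ := hu
        have h2' : α w = s₂ := hw
        rw [h1', h2']
      have : h.choose ++ w ∈ K := hK1 this
      simpa [g, h] using this
    · simp [g, h]
  have hne : K₂ ∩ α ⁻¹' {t₂} ≠ ∅ := fun hc => h2 ⟨K₂, hK₂C, hsub2, hc⟩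
  obtain ⟨v, hvK₂, hvt₂⟩ := Set.nonempty_iff_ne_empty.mpr hne
  refine h1 ⟨{w | w ++ v ∈ K}, hqr K hKC v, ?_, ?_⟩
  · intro u hu
    have hex : ∃ u', u' ∈ S ∧ dfa.eval u' = dfa.eval u := ⟨u, hu, rfl⟩
    have hv' : v ∈ g (dfa.eval u) := by
      have := Set.mem_iInter.mp (by simpa [hK₂def] using hvK₂) (dfa.eval u)
      simpa using this
    have : hex.choose ++ v ∈ K := by simpa [g, hex] using hv'
    exact (key u hex.choose v hex.choose_spec.2.symm).mpr this
  · ext u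
    simp only [Set.mem_inter_iff, Set.mem_setOf_eq, Set.mem_preimage, Set.mem_singleton_iff,
      Set.mem_empty_iff_false, iff_false, not_and]
    intro huK hut₁
    have : α (u ++ v) = t₁ * t₂ := by rw [hmul, hut₁, hvt₂]
    have : u ++ v ∈ K ∩ α ⁻¹' {t₁ * t₂} := ⟨huK, this⟩
    rw [hK2] at this
    exact this
end

section
/- Let C be a quotienting lattice of regular languages, M a finite monoid, α : A* → M a surjective morphism. Suppose α satisfies: e ≤ ete for every C-pair (e,t) with e idempotent, where ≤ is a compatible order on M. Then for every idempotent e ∈ M there exists a language K_e ∈ C such that (1) for all u ∈ K_e, e ≤ e·α(u)·e, and (2) α⁻¹(e) ⊆ K_e. -/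
theorem stmt_5 {A M : Type} [Monoid M] [Fintype M] [PartialOrder M]
    (hcomp : ∀ a b c d : M, a ≤ b → c ≤ d → a * c ≤ b * d)
    (C : Set (Set (List A)))
    (hreg : ∀ K ∈ C, IsReg K)
    (hempty : (∅ : Set (List A)) ∈ C) (huniv : (Set.univ : Set (List A)) ∈ C)
    (hunion : ∀ K L : Set (List A), K ∈ C → L ∈ C → K ∪ L ∈ C)
    (hinter : ∀ K L : Set (List A), K ∈ C → L ∈ C → K ∩ L ∈ C)
    (hql : ∀ L ∈ C, ∀ u : List A, {w : List A | u ++ w ∈ L} ∈ C)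
    (hqr : ∀ L ∈ C, ∀ u : List A, {w : List A | w ++ u ∈ L} ∈ C)
    (α : List A → M)
    (hone : α [] = 1) (hmul : ∀ u v : List A, α (u ++ v) = α u * α v)
    (hsurj : Function.Surjective α)
    (heq : ∀ e t : M, e * e = e → CPair C α e t → e ≤ e * t * e) :
    ∀ e : M, e * e = e →
      ∃ K ∈ C, (∀ u ∈ K, e ≤ e * α u * e) ∧ α ⁻¹' {e} ⊆ K := by
  intro e he
  classical
  have hG : ∀ t : M, ∃ K, K ∈ C ∧ α ⁻¹' {e} ⊆ K ∧
      (¬ CPair C α e t → K ∩ α ⁻¹' {t} = ∅) := by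
    intro t
    by_cases h : CPair C α e t
    · exact ⟨Set.univ, huniv, Set.subset_univ _, fun h' => absurd h h'⟩
    · obtain ⟨K, hK, h1, h2⟩ := not_not.mp h
      exact ⟨K, hK, h1, fun _ => h2⟩
  choose G hGC hGe hGsep using hG
  have hIC : ∀ s : Finset M, (⋂ t ∈ s, G t) ∈ C := by
    intro s
    induction s using Finset.induction with
    | empty => simpa using huniv
    | insert _ _ hx ih =>
      rw [Finset.set_biInter_insert]
      exact hinter _ _ (hGC _) ih
  refine ⟨⋂ t ∈ (Finset.univ : Finset M), G t, hIC _, ?_, ?_⟩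
  · intro u hu
    by_cases h : CPair C α e (α u)
    · exact heq e (α u) he h
    · exfalso
      have hsep := hGsep (α u) h
      have hu' : u ∈ G (α u) := by
        simp only [Set.mem_iInter] at hu
        exact hu (α u) (Finset.mem_univ _)
      have : u ∈ G (α u) ∩ α ⁻¹' {α u} := ⟨hu', rfl⟩
      rw [hsep] at this
      exact this
  · intro u hu
    simp only [Set.mem_iInter]
    exact fun t _ => hGe t hu
end

section
/- For any finite monoid M and any morphism α : A* → M, every word w ∈ A* admits an α-factorization forest of height at most 3|M| − 1 (Simon's Factorization Forest Theorem). -/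
/-- `HasForest α w h` : the word `w` admits an `α`-factorization forest of height at
most `h`. Leaves are single letters or the empty word (height `0`); inner nodes are
binary, or idempotent nodes whose children all map to a common idempotent under `α`. -/
inductive HasForest {A M : Type} [Monoid M] (α : List A → M) : List A → ℕ → Prop
  | empty (h : ℕ) : HasForest α [] h
  | letter (a : A) (h : ℕ) : HasForest α [a] h
  | binary (u v : List A) (h : ℕ) (hu : HasForest α u h) (hv : HasForest α v h) :
      HasForest α (u ++ v) (h + 1)
  | idem (e : M) (he : e * e = e) (ws : List (List A)) (h : ℕ)
      (hmaps : ∀ w ∈ ws, α w = e) (hrec : ∀ w ∈ ws, HasForest α w h) :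
      HasForest α ws.flatten (h + 1)

namespace SFF

variable {A M : Type} [Monoid M]

theorem forest_succ {α : List A → M} {w : List A} {h : ℕ} (hf : HasForest α w h) :
    HasForest α w (h + 1) := by
  induction hf with
  | empty h => exact .empty _
  | letter a h => exact .letter _ _
  | binary u v h hu hv ihu ihv => exact .binary u v (h+1) ihu ihv
  | idem e he ws h hmaps hrec ih => exact .idem e he ws (h+1) hmaps ih

theorem forest_mono {α : List A → M} {w : List A} {h h' : ℕ} (hf : HasForest α w h)
    (hh : h ≤ h') : HasForest α w h' := by
  induction hh with
  | refl => exact hf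
  | step _ ih => exact forest_succ ih

/-! ### Green's relations -/

def leR (a b : M) : Prop := ∃ u, a = b * u
def leL (a b : M) : Prop := ∃ u, a = u * b
def leJ (a b : M) : Prop := ∃ u v, a = u * b * v
def eqR (a b : M) : Prop := leR a b ∧ leR b a
def eqL (a b : M) : Prop := leL a b ∧ leL b a
def eqJ (a b : M) : Prop := leJ a b ∧ leJ b a

theorem leR.refl (a : M) : leR a a := ⟨1, (mul_one a).symm⟩
theorem leL.refl (a : M) : leL a a := ⟨1, (one_mul a).symm⟩
theorem leJ.refl (a : M) : leJ a a := ⟨1, 1, by simp⟩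
theorem leR.trans {a b c : M} : leR a b → leR b c → leR a c := by
  rintro ⟨u, rfl⟩ ⟨v, rfl⟩; exact ⟨v * u, mul_assoc _ _ _⟩
theorem leL.trans {a b c : M} : leL a b → leL b c → leL a c := by
  rintro ⟨u, rfl⟩ ⟨v, rfl⟩; exact ⟨u * v, (mul_assoc _ _ _).symm⟩
theorem leJ.trans {a b c : M} : leJ a b → leJ b c → leJ a c := by
  rintro ⟨u, v, rfl⟩ ⟨x, y, rfl⟩; exact ⟨u * x, y * v, by simp [mul_assoc]⟩
theorem leR.toJ {a b : M} : leR a b → leJ a b := by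
  rintro ⟨u, rfl⟩; exact ⟨1, u, by simp⟩
theorem leL.toJ {a b : M} : leL a b → leJ a b := by
  rintro ⟨u, rfl⟩; exact ⟨u, 1, by simp⟩
theorem eqJ.refl (a : M) : eqJ a a := ⟨leJ.refl a, leJ.refl a⟩
theorem eqJ.symm {a b : M} (h : eqJ a b) : eqJ b a := ⟨h.2, h.1⟩
theorem eqJ.trans {a b c : M} (h : eqJ a b) (h' : eqJ b c) : eqJ a c :=
  ⟨h.1.trans h'.1, h'.2.trans h.2⟩
theorem eqR.symm {a b : M} (h : eqR a b) : eqR b a := ⟨h.2, h.1⟩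
theorem eqR.trans {a b c : M} (h : eqR a b) (h' : eqR b c) : eqR a c :=
  ⟨h.1.trans h'.1, h'.2.trans h.2⟩
theorem eqR.toJ {a b : M} (h : eqR a b) : eqJ a b := ⟨h.1.toJ, h.2.toJ⟩
theorem eqL.symm {a b : M} (h : eqL a b) : eqL b a := ⟨h.2, h.1⟩
theorem eqL.trans {a b c : M} (h : eqL a b) (h' : eqL b c) : eqL a c :=
  ⟨h.1.trans h'.1, h'.2.trans h.2⟩

theorem pow_idem {e : M} (he : e * e = e) : ∀ k, e ^ (k + 1) = e := by
  intro k; induction k with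
  | zero => simp
  | succ k ih => rw [pow_succ, ih, he]

theorem pow_idem_aux {x : M} {m p : ℕ} (hm : 1 ≤ m) (hp : 1 ≤ p)
    (hbase : x ^ (m + p) = x ^ m) : ∃ n, 1 ≤ n ∧ x ^ n * x ^ n = x ^ n := by
  have hstep : ∀ t, m ≤ t → x ^ (t + p) = x ^ t := by
    intro t ht
    have h1 : t + p = (t - m) + (m + p) := by omega
    rw [h1, pow_add, hbase, ← pow_add]
    congr 1; omega
  have hgen : ∀ k t, m ≤ t → x ^ (t + k * p) = x ^ t := by
    intro k
    induction k with
    | zero => simp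
    | succ k ih =>
      intro t ht
      have h1 : t + (k + 1) * p = (t + k * p) + p := by ring
      rw [h1, hstep _ (by omega), ih t ht]
  refine ⟨m * p, by nlinarith, ?_⟩
  rw [← pow_add]
  exact hgen m (m * p) (by nlinarith)

variable [Fintype M]

theorem exists_pow_idem_one (x : M) : ∃ n, 1 ≤ n ∧ x ^ n * x ^ n = x ^ n := by
  obtain ⟨i, j, hij, hpow⟩ : ∃ i j : ℕ, i ≠ j ∧ x ^ (i + 1) = x ^ (j + 1) := by
    obtain ⟨i, j, hij, h⟩ := Finite.exists_ne_map_eq_of_infinite (fun n : ℕ => x ^ (n + 1))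
    exact ⟨i, j, hij, h⟩
  rcases Nat.lt_or_ge i j with hlt | hge
  · exact pow_idem_aux (x := x) (m := i + 1) (p := j - i) (by omega) (by omega)
      (by rw [show i + 1 + (j - i) = j + 1 by omega, ← hpow])
  · have hlt : j < i := by omega
    exact pow_idem_aux (x := x) (m := j + 1) (p := i - j) (by omega) (by omega)
      (by rw [show j + 1 + (i - j) = i + 1 by omega, hpow])

theorem exists_univ_exponent : ∃ N, 1 ≤ N ∧ ∀ x : M, x ^ N * x ^ N = x ^ N := by
  classical
  choose n hn1 hnidem using fun x : M => exists_pow_idem_one x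
  refine ⟨∏ x : M, n x, Finset.one_le_prod' (fun x _ => hn1 x), ?_⟩
  intro x
  obtain ⟨k, hk⟩ := Finset.dvd_prod_of_mem n (Finset.mem_univ x)
  have h1 : (1:ℕ) ≤ ∏ y : M, n y := Finset.one_le_prod' (fun y _ => hn1 y)
  rcases k with _ | k'
  · rw [hk] at h1; simp at h1
  · have : x ^ (∏ y : M, n y) = x ^ n x := by
      rw [hk, pow_mul]
      exact pow_idem (hnidem x) k'
    rw [this]; exact hnidem x

/-- stability on the R side -/
theorem stabR {a b : M} (h1 : leR a b) (h2 : leJ b a) : leR b a := by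
  obtain ⟨u, rfl⟩ := h1
  obtain ⟨x, y, hxy⟩ := h2
  obtain ⟨N, hN1, hNidem⟩ := exists_univ_exponent (M := M)
  have hstep1 : b = x * b * (u * y) := by
    conv_lhs => rw [hxy]
    simp [mul_assoc]
  have key : ∀ k : ℕ, b = x ^ k * b * (u * y) ^ k := by
    intro k; induction k with
    | zero => simp
    | succ k ih =>
      calc b = x * b * (u * y) := hstep1
        _ = x * (x ^ k * b * (u * y) ^ k) * (u * y) := by rw [← ih]
        _ = x ^ (k+1) * b * (u * y) ^ (k+1) := by
            rw [pow_succ', pow_succ]; simp [mul_assoc]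
  have hb : b = x ^ N * b * (u * y) ^ N := key N
  have hEb : x ^ N * b = b := by
    calc x ^ N * b = x ^ N * (x ^ N * b * (u * y) ^ N) := by rw [← hb]
      _ = (x ^ N * x ^ N) * b * (u * y) ^ N := by simp [mul_assoc]
      _ = x ^ N * b * (u * y) ^ N := by rw [hNidem x]
      _ = b := hb.symm
  have hbF : b = b * (u * y) ^ N := by
    calc b = x ^ N * b * (u * y) ^ N := hb
      _ = b * (u * y) ^ N := by rw [hEb]
  obtain ⟨N', rfl⟩ : ∃ N', N = N' + 1 := ⟨N - 1, by omega⟩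
  refine ⟨y * (u * y) ^ N', ?_⟩
  calc b = b * (u * y) ^ (N' + 1) := hbF
    _ = b * u * (y * (u * y) ^ N') := by
        rw [pow_succ']
        simp [mul_assoc]

theorem stabL {a b : M} (h1 : leL a b) (h2 : leJ b a) : leL b a := by
  obtain ⟨u, rfl⟩ := h1
  obtain ⟨x, y, hxy⟩ := h2
  obtain ⟨N, hN1, hNidem⟩ := exists_univ_exponent (M := M)
  have hstep1 : b = (x * u) * b * y := by
    conv_lhs => rw [hxy]
    simp [mul_assoc]
  have key : ∀ k : ℕ, b = (x * u) ^ k * b * y ^ k := by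
    intro k; induction k with
    | zero => simp
    | succ k ih =>
      calc b = (x * u) * b * y := hstep1
        _ = (x * u) * ((x * u) ^ k * b * y ^ k) * y := by rw [← ih]
        _ = (x * u) ^ (k+1) * b * y ^ (k+1) := by
            rw [pow_succ', pow_succ]; simp [mul_assoc]
  have hb : b = (x * u) ^ N * b * y ^ N := key N
  have hbF : b * y ^ N = b := by
    calc b * y ^ N = ((x * u) ^ N * b * y ^ N) * y ^ N := by rw [← hb]
      _ = (x * u) ^ N * b * (y ^ N * y ^ N) := by simp [mul_assoc]
      _ = (x * u) ^ N * b * y ^ N := by rw [hNidem y]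
      _ = b := hb.symm
  have hEb : b = (x * u) ^ N * b := by
    calc b = (x * u) ^ N * b * y ^ N := hb
      _ = (x * u) ^ N * (b * y ^ N) := by rw [mul_assoc]
      _ = (x * u) ^ N * b := by rw [hbF]
  obtain ⟨N', rfl⟩ : ∃ N', N = N' + 1 := ⟨N - 1, by omega⟩
  refine ⟨(x * u) ^ N' * x, ?_⟩
  calc b = (x * u) ^ (N' + 1) * b := hEb
    _ = (x * u) ^ N' * x * (u * b) := by
        rw [pow_succ]
        simp [mul_assoc]


/-- unique idempotent in an H-class -/
theorem hUnique {e f : M} (he : e * e = e) (hf : f * f = f)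
    (h1 : leR f e) (h2 : leL e f) : e = f := by
  obtain ⟨u, hu⟩ := h1
  obtain ⟨v, hv⟩ := h2
  have hef : e * f = f := by
    calc e * f = e * (e * u) := by rw [← hu]
      _ = (e * e) * u := by rw [mul_assoc]
      _ = e * u := by rw [he]
      _ = f := hu.symm
  have hef' : e * f = e := by
    calc e * f = (v * f) * f := by rw [← hv]
      _ = v * (f * f) := by rw [mul_assoc]
      _ = v * f := by rw [hf]
      _ = e := hv.symm
  rw [← hef, hef']

open scoped Classical in
noncomputable def Rcl (t : M) : Finset M := Finset.univ.filter (fun y => eqR y t)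

theorem mem_Rcl {y t : M} : y ∈ Rcl t ↔ eqR y t := by
  classical
  simp [Rcl]

theorem Rcl_eq_of_eqR {t t' : M} (h : eqR t t') : Rcl t = Rcl t' := by
  ext y; simp only [mem_Rcl]
  exact ⟨fun h' => h'.trans h, fun h' => h'.trans h.symm⟩

theorem card_Rcl_le {a b : M} (hab : eqJ a b) : (Rcl a).card ≤ (Rcl b).card := by
  obtain ⟨x, y, hxy⟩ := hab.2
  have hxa1 : leR b (x * a) := ⟨y, by rw [hxy]⟩
  have hxa2 : leJ (x * a) a := ⟨x, 1, by simp⟩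
  have hxa3 : leJ (x * a) b := hxa2.trans hab.1
  have hxa4 : eqR b (x * a) := ⟨hxa1, stabR hxa1 hxa3⟩
  have hxa5 : leL (x * a) a := ⟨x, rfl⟩
  have hxa6 : leJ a (x * a) := hab.1.trans hxa1.toJ
  have hxa7 : leL a (x * a) := stabL hxa5 hxa6
  obtain ⟨w, hw⟩ := hxa7
  apply Finset.card_le_card_of_injOn (fun z => x * z)
  · intro z hz
    rw [Finset.mem_coe, mem_Rcl] at hz ⊢
    obtain ⟨u, hu⟩ := hz.1
    obtain ⟨u', hu'⟩ := hz.2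
    have e1 : leR (x * z) (x * a) := ⟨u, by rw [hu, mul_assoc]⟩
    have e2 : leR (x * a) (x * z) := ⟨u', by rw [hu', mul_assoc]⟩
    exact (eqR.trans ⟨e1, e2⟩ hxa4.symm)
  · intro z hz z' hz' hzz
    rw [Finset.mem_coe, mem_Rcl] at hz hz'
    have hz1 : eqR z a := hz
    have hz1' : eqR z' a := hz'
    obtain ⟨u, hu⟩ := hz1.1
    obtain ⟨u', hu'⟩ := hz1'.1
    have key : ∀ t : M, ∀ s : M, t = a * s → w * (x * t) = t := by
      intro t s hts
      calc w * (x * t) = w * (x * (a * s)) := by rw [hts]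
        _ = (w * (x * a)) * s := by simp [mul_assoc]
        _ = a * s := by rw [← hw]
        _ = t := hts.symm
    calc z = w * (x * z) := (key z u hu).symm
      _ = w * (x * z') := by rw [show x * z = x * z' from hzz]
      _ = z' := key z' u' hu'

open scoped Classical in
noncomputable def Jeps (q : M) (ρ : Finset M) : M :=
  if h : ∃ e, e * e = e ∧ eqL e q ∧ e ∈ ρ then h.choose else 1

theorem Jeps_eq {q : M} {ρ : Finset M} {x : M}
    (hρ : ∀ y z : M, y ∈ ρ → z ∈ ρ → eqR y z)
    (hx : x * x = x ∧ eqL x q ∧ x ∈ ρ) : Jeps q ρ = x := by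
  have hex : ∃ e, e * e = e ∧ eqL e q ∧ e ∈ ρ := ⟨x, hx⟩
  classical
  rw [Jeps]
  rw [dif_pos hex]
  obtain ⟨he, heL, heρ⟩ := hex.choose_spec
  exact hUnique he hx.1 (hρ x hex.choose hx.2.2 heρ).1 (heL.1.trans hx.2.1.2)


/-! ### Segments of a block sequence -/

def seg {A : Type} (v : ℕ → List A) (a b : ℕ) : List A := ((List.Ico a b).map v).flatten

theorem seg_append {A : Type} (v : ℕ → List A) {a b c : ℕ} (h1 : a ≤ b) (h2 : b ≤ c) :
    seg v a b ++ seg v b c = seg v a c := by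
  unfold seg
  rw [← List.flatten_append, ← List.map_append, List.Ico.append_consecutive h1 h2]

theorem seg_single {A : Type} (v : ℕ → List A) (a : ℕ) : seg v a (a+1) = v a := by
  unfold seg
  rw [List.Ico.succ_singleton]
  simp

theorem seg_self {A : Type} (v : ℕ → List A) (a : ℕ) : seg v a a = [] := by
  unfold seg
  simp [List.Ico.self_empty]

/-! ### The core combinatorial lemmas -/

theorem thin (α : List A → M) (v : ℕ → List A) (N : ℕ) (c : ℕ → M × Finset M)
    (κ : ℕ → M) (ee : M × Finset M → M) (h0 : ℕ)
    (Hκ : ∀ k, 1 ≤ k → k < N → κ k = (c k).1)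
    (HA : ∀ i j, 1 ≤ i → i < j → j ≤ N → κ j = (c i).1 →
      α (seg v i j) = ee (c i) ∧ ee (c i) * ee (c i) = ee (c i)) :
    ∀ (m : ℕ) (Q : Finset (M × Finset M)) (a b : ℕ), Q.card ≤ m → a < b → b ≤ N →
    (∀ i, a ≤ i → i < b → HasForest α (v i) h0) →
    (∀ k, a < k → k < b → c k ∈ Q) →
    HasForest α (seg v a b) (h0 + 3 * Q.card) ∧
      (∀ k, a < k → k < b → (c k).1 = κ b →
        HasForest α (seg v a b) (h0 + 3 * Q.card - 1)) := by
  intro m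
  induction m with
  | zero =>
    intro Q a b hQm hab hbN Hblock Hcol
    have hQ : Q = ∅ := Finset.card_eq_zero.mp (Nat.le_antisymm hQm (Nat.zero_le _))
    have hb1 : b = a + 1 := by
      by_contra hne
      have : a + 1 < b := by omega
      have := Hcol (a+1) (by omega) this
      simp [hQ] at this
    subst hb1
    constructor
    · rw [seg_single]
      exact forest_mono (Hblock a (le_refl a) (by omega)) (by omega)
    · intro k hk1 hk2
      omega
  | succ m IH =>
    intro Q a b hQm hab hbN Hblock Hcol
    classical
    by_cases hb1 : b = a + 1
    · subst hb1
      constructor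
      · rw [seg_single]
        exact forest_mono (Hblock a (le_refl a) (by omega)) (by omega)
      · intro k hk1 hk2
        omega
    have hb2 : a + 2 ≤ b := by omega
    by_cases good : ∃ k, a < k ∧ k < b ∧ (c k).1 = κ b
    case pos =>
      obtain ⟨k₀, hk₀a, hk₀b, hk₀κ⟩ := good
      set col := c k₀ with hcol
      have hcolQ : col ∈ Q := Hcol k₀ hk₀a hk₀b
      have hQpos : 1 ≤ Q.card := Finset.card_pos.mpr ⟨col, hcolQ⟩
      set Q' := Q.erase col with hQ'
      have hQ'card : Q'.card = Q.card - 1 := Finset.card_erase_of_mem hcolQ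
      set F : Finset ℕ := (Finset.Ioo a b).filter (fun k => c k = col) with hF
      have hFmem : ∀ k, k ∈ F ↔ (a < k ∧ k < b ∧ c k = col) := by
        intro k
        simp [hF, Finset.mem_filter, Finset.mem_Ioo, and_assoc]
      have hFne : F.Nonempty := ⟨k₀, (hFmem k₀).mpr ⟨hk₀a, hk₀b, rfl⟩⟩
      set i₁ := F.min' hFne with hi₁
      set l := F.max' hFne with hl
      obtain ⟨hi₁a, hi₁b, hi₁c⟩ := (hFmem i₁).mp (F.min'_mem hFne)
      obtain ⟨hla, hlb, hlc⟩ := (hFmem l).mp (F.max'_mem hFne)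
      have hil : i₁ ≤ l := F.min'_le l (F.max'_mem hFne)
      set Hr := h0 + 3 * Q'.card with hHr
      have subIH : ∀ x y, a ≤ x → x < y → y ≤ b → (∀ k, x < k → k < y → c k ≠ col) →
          HasForest α (seg v x y) Hr := by
        intro x y hx hxy hyb hnocol
        refine (IH Q' x y (by omega) hxy (le_trans hyb hbN)
          (fun i hi1 hi2 => Hblock i (by omega) (by omega)) ?_).1
        intro k h1 h2
        exact Finset.mem_erase.mpr ⟨hnocol k h1 h2, Hcol k (by omega) (by omega)⟩
      have chain : ∀ fuel a', l - a' ≤ fuel → a < a' → a' ≤ l → c a' = col →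
          ∃ ws : List (List A), ws.flatten = seg v a' l ∧
            ∀ u ∈ ws, α u = ee col ∧ HasForest α u Hr := by
        intro fuel
        induction fuel with
        | zero =>
          intro a' hf h1 h2 h3
          have : a' = l := by omega
          subst this
          exact ⟨[], by simp [seg_self], by simp⟩
        | succ fuel ihf =>
          intro a' hf h1 h2 h3
          by_cases heq : a' = l
          · subst heq
            exact ⟨[], by simp [seg_self], by simp⟩
          have hal : a' < l := by omega
          set F' := F.filter (fun k => a' < k) with hF'
          have hlF' : l ∈ F' := by
            rw [hF', Finset.mem_filter]
            exact ⟨F.max'_mem hFne, hal⟩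
          have hF'ne : F'.Nonempty := ⟨l, hlF'⟩
          set k₁ := F'.min' hF'ne with hk₁
          have hk₁F' : k₁ ∈ F' := F'.min'_mem hF'ne
          have hk₁F : k₁ ∈ F := (Finset.mem_filter.mp hk₁F').1
          have hk₁a' : a' < k₁ := (Finset.mem_filter.mp hk₁F').2
          obtain ⟨hk₁a, hk₁b, hk₁c⟩ := (hFmem k₁).mp hk₁F
          have hk₁l : k₁ ≤ l := F'.min'_le l hlF'
          have hnocol : ∀ k, a' < k → k < k₁ → c k ≠ col := by
            intro k h1' h2' hc
            have hkF : k ∈ F := (hFmem k).mpr ⟨by omega, by omega, hc⟩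
            have hkF' : k ∈ F' := by
              rw [hF', Finset.mem_filter]; exact ⟨hkF, h1'⟩
            have := F'.min'_le k hkF'
            omega
          have hval := HA a' k₁ (by omega) hk₁a' (by omega)
            (by rw [Hκ k₁ (by omega) (by omega), hk₁c, h3])
          rw [h3] at hval
          have hforest : HasForest α (seg v a' k₁) Hr :=
            subIH a' k₁ (by omega) hk₁a' (by omega) hnocol
          obtain ⟨ws', hws'flat, hws'mem⟩ := ihf k₁ (by omega) (by omega) hk₁l hk₁c
          refine ⟨seg v a' k₁ :: ws', ?_, ?_⟩
          · rw [List.flatten_cons, hws'flat, seg_append v (le_of_lt hk₁a') hk₁l]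
          · intro u hu
            rcases List.mem_cons.mp hu with h | h
            · subst h; exact ⟨hval.1, hforest⟩
            · exact hws'mem u h
      -- final chunk (l, b]
      have hcl : (c l).1 = κ b := by rw [hlc]; exact hk₀κ
      have hfin := HA l b (by omega) hlb hbN hcl.symm
      rw [hlc] at hfin
      have hfinF : HasForest α (seg v l b) Hr := by
        refine subIH l b (by omega) hlb (le_refl b) ?_
        intro k h1 h2 hc
        have hkF : k ∈ F := (hFmem k).mpr ⟨by omega, h2, hc⟩
        have := F.le_max' k hkF
        omega
      obtain ⟨ws, hwsflat, hwsmem⟩ := chain (l - i₁) i₁ (le_refl _) hi₁a hil hi₁c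
      -- idem node over ws ++ [seg v l b]
      have hidemnode : HasForest α (seg v i₁ b) (Hr + 1) := by
        have hnode := HasForest.idem (ee col) hfin.2 (ws ++ [seg v l b]) Hr
          (by
            intro u hu
            rcases List.mem_append.mp hu with h | h
            · exact (hwsmem u h).1
            · rw [List.mem_singleton.mp h]; exact hfin.1)
          (by
            intro u hu
            rcases List.mem_append.mp hu with h | h
            · exact (hwsmem u h).2
            · rw [List.mem_singleton.mp h]; exact hfinF)
        have hflat : (ws ++ [seg v l b]).flatten = seg v i₁ b := by
          rw [List.flatten_append, hwsflat]
          simp only [List.flatten_cons, List.flatten_nil, List.append_nil]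
          exact seg_append v hil (le_of_lt hlb)
        rwa [hflat] at hnode
      have hP : HasForest α (seg v a i₁) Hr := by
        refine subIH a i₁ (le_refl a) hi₁a (by omega) ?_
        intro k h1 h2 hc
        have hkF : k ∈ F := (hFmem k).mpr ⟨h1, by omega, hc⟩
        have := F.min'_le k hkF
        omega
      have hbin : HasForest α (seg v a b) (Hr + 2) := by
        have := HasForest.binary _ _ (Hr + 1) (forest_mono hP (by omega)) hidemnode
        rwa [seg_append v (le_of_lt hi₁a) (by omega)] at this
      have hbound : Hr + 2 = h0 + 3 * Q.card - 1 := by omega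
      rw [hbound] at hbin
      exact ⟨forest_mono hbin (by omega), fun k _ _ _ => hbin⟩
    case neg =>
      set col := c (a+1) with hcol
      have hcolQ : col ∈ Q := Hcol (a+1) (by omega) (by omega)
      have hQpos : 1 ≤ Q.card := Finset.card_pos.mpr ⟨col, hcolQ⟩
      set Q' := Q.erase col with hQ'
      have hQ'card : Q'.card = Q.card - 1 := Finset.card_erase_of_mem hcolQ
      set F : Finset ℕ := (Finset.Ioo a b).filter (fun k => c k = col) with hF
      have hFmem : ∀ k, k ∈ F ↔ (a < k ∧ k < b ∧ c k = col) := by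
        intro k
        simp [hF, Finset.mem_filter, Finset.mem_Ioo, and_assoc]
      have hFne : F.Nonempty := ⟨a+1, (hFmem (a+1)).mpr ⟨by omega, by omega, rfl⟩⟩
      set i₁ := F.min' hFne with hi₁
      set l := F.max' hFne with hl
      obtain ⟨hi₁a, hi₁b, hi₁c⟩ := (hFmem i₁).mp (F.min'_mem hFne)
      obtain ⟨hla, hlb, hlc⟩ := (hFmem l).mp (F.max'_mem hFne)
      have hil : i₁ ≤ l := F.min'_le l (F.max'_mem hFne)
      set Hr := h0 + 3 * Q'.card with hHr
      have subIH : ∀ x y, a ≤ x → x < y → y ≤ b → (∀ k, x < k → k < y → c k ≠ col) →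
          HasForest α (seg v x y) Hr := by
        intro x y hx hxy hyb hnocol
        refine (IH Q' x y (by omega) hxy (le_trans hyb hbN)
          (fun i hi1 hi2 => Hblock i (by omega) (by omega)) ?_).1
        intro k h1 h2
        exact Finset.mem_erase.mpr ⟨hnocol k h1 h2, Hcol k (by omega) (by omega)⟩
      have chain : ∀ fuel a', l - a' ≤ fuel → a < a' → a' ≤ l → c a' = col →
          ∃ ws : List (List A), ws.flatten = seg v a' l ∧
            ∀ u ∈ ws, α u = ee col ∧ HasForest α u Hr := by
        intro fuel
        induction fuel with
        | zero =>
          intro a' hf h1 h2 h3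
          have : a' = l := by omega
          subst this
          exact ⟨[], by simp [seg_self], by simp⟩
        | succ fuel ihf =>
          intro a' hf h1 h2 h3
          by_cases heq : a' = l
          · subst heq
            exact ⟨[], by simp [seg_self], by simp⟩
          have hal : a' < l := by omega
          set F' := F.filter (fun k => a' < k) with hF'
          have hlF' : l ∈ F' := by
            rw [hF', Finset.mem_filter]
            exact ⟨F.max'_mem hFne, hal⟩
          have hF'ne : F'.Nonempty := ⟨l, hlF'⟩
          set k₁ := F'.min' hF'ne with hk₁
          have hk₁F' : k₁ ∈ F' := F'.min'_mem hF'ne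
          have hk₁F : k₁ ∈ F := (Finset.mem_filter.mp hk₁F').1
          have hk₁a' : a' < k₁ := (Finset.mem_filter.mp hk₁F').2
          obtain ⟨hk₁a, hk₁b, hk₁c⟩ := (hFmem k₁).mp hk₁F
          have hk₁l : k₁ ≤ l := F'.min'_le l hlF'
          have hnocol : ∀ k, a' < k → k < k₁ → c k ≠ col := by
            intro k h1' h2' hc
            have hkF : k ∈ F := (hFmem k).mpr ⟨by omega, by omega, hc⟩
            have hkF' : k ∈ F' := by
              rw [hF', Finset.mem_filter]; exact ⟨hkF, h1'⟩
            have := F'.min'_le k hkF'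
            omega
          have hval := HA a' k₁ (by omega) hk₁a' (by omega)
            (by rw [Hκ k₁ (by omega) (by omega), hk₁c, h3])
          rw [h3] at hval
          have hforest : HasForest α (seg v a' k₁) Hr :=
            subIH a' k₁ (by omega) hk₁a' (by omega) hnocol
          obtain ⟨ws', hws'flat, hws'mem⟩ := ihf k₁ (by omega) (by omega) hk₁l hk₁c
          refine ⟨seg v a' k₁ :: ws', ?_, ?_⟩
          · rw [List.flatten_cons, hws'flat, seg_append v (le_of_lt hk₁a') hk₁l]
          · intro u hu
            rcases List.mem_cons.mp hu with h | h
            · subst h; exact ⟨hval.1, hforest⟩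
            · exact hws'mem u h
      have hP : HasForest α (seg v a i₁) Hr := by
        refine subIH a i₁ (le_refl a) hi₁a (by omega) ?_
        intro k h1 h2 hc
        have hkF : k ∈ F := (hFmem k).mpr ⟨h1, by omega, hc⟩
        have := F.min'_le k hkF
        omega
      have hS : HasForest α (seg v l b) Hr := by
        refine subIH l b (by omega) hlb (le_refl b) ?_
        intro k h1 h2 hc
        have hkF : k ∈ F := (hFmem k).mpr ⟨by omega, h2, hc⟩
        have := F.le_max' k hkF
        omega
      have hmain : HasForest α (seg v a b) (h0 + 3 * Q.card) := by
        by_cases hileq : i₁ = l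
        · have hS' : HasForest α (seg v i₁ b) Hr := by rw [hileq]; exact hS
          have := HasForest.binary _ _ Hr hP hS'
          rw [seg_append v (le_of_lt hi₁a) (le_of_lt hi₁b)] at this
          exact forest_mono this (by omega)
        · have hilt : i₁ < l := by omega
          have hidem := (HA i₁ l (by omega) hilt (by omega)
            (by rw [Hκ l (by omega) (by omega), hlc, hi₁c])).2
          rw [hi₁c] at hidem
          obtain ⟨ws, hwsflat, hwsmem⟩ := chain (l - i₁) i₁ (le_refl _) hi₁a hil hi₁c
          have hidemnode : HasForest α (seg v i₁ l) (Hr + 1) := by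
            have hnode := HasForest.idem (ee col) hidem ws Hr
              (fun u hu => (hwsmem u hu).1) (fun u hu => (hwsmem u hu).2)
            rwa [hwsflat] at hnode
          have hbin1 : HasForest α (seg v i₁ b) (Hr + 2) := by
            have := HasForest.binary _ _ (Hr + 1) hidemnode (forest_mono hS (by omega))
            rwa [seg_append v hil (le_of_lt hlb)] at this
          have hbin2 : HasForest α (seg v a b) (Hr + 3) := by
            have := HasForest.binary _ _ (Hr + 2) (forest_mono hP (by omega)) hbin1
            rwa [seg_append v (le_of_lt hi₁a) (by omega)] at this
          exact forest_mono hbin2 (by omega)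
      refine ⟨hmain, ?_⟩
      intro k hk1 hk2 hkκ
      exact absurd ⟨k, hk1, hk2, hkκ⟩ good


theorem fat (α : List A → M) (v : ℕ → List A) (N : ℕ) (c : ℕ → M × Finset M)
    (κ : ℕ → M) (ee : M × Finset M → M) (h0 : ℕ)
    (Hκ : ∀ k, 1 ≤ k → k < N → κ k = (c k).1)
    (HA : ∀ i j, 1 ≤ i → i < j → j ≤ N → κ j = (c i).1 →
      α (seg v i j) = ee (c i) ∧ ee (c i) * ee (c i) = ee (c i)) :
    ∀ (m : ℕ) (Q : Finset (M × Finset M)) (a : ℕ), Q.card ≤ m → a < N →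
    (∀ i, a ≤ i → i < N - 1 → HasForest α (v i) h0) →
    HasForest α (v (N-1)) (h0 + 1) →
    (∀ k, a < k → k < N → c k ∈ Q) →
    HasForest α (seg v a N) (max (h0 + 1) (h0 + 3 * Q.card)) ∧
      (2 ≤ Q.card → (∃ k, a < k ∧ k < N ∧ (c k).1 = κ N) →
        HasForest α (seg v a N) (h0 + 3 * Q.card - 1)) := by
  intro m
  induction m with
  | zero =>
    intro Q a hQm haN Hblock Hlast Hcol
    have hQ : Q = ∅ := Finset.card_eq_zero.mp (Nat.le_antisymm hQm (Nat.zero_le _))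
    have hb1 : a = N - 1 := by
      by_contra hne
      have : a + 1 < N := by omega
      have := Hcol (a+1) (by omega) this
      simp [hQ] at this
    subst hb1
    constructor
    · have hseg : seg v (N-1) N = v (N-1) := by
        have hN : N - 1 + 1 = N := by omega
        have := seg_single v (N-1)
        rwa [hN] at this
      rw [hseg]
      exact forest_mono Hlast (by omega)
    · intro h2Q
      simp [hQ] at h2Q
  | succ m IH =>
    intro Q a hQm haN Hblock Hlast Hcol
    classical
    by_cases hb1 : a = N - 1
    · subst hb1
      constructor
      · have hseg : seg v (N-1) N = v (N-1) := by
          have hN : N - 1 + 1 = N := by omega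
          have := seg_single v (N-1)
          rwa [hN] at this
        rw [hseg]
        exact forest_mono Hlast (by omega)
      · intro h2Q ⟨k, hk1, hk2, _⟩
        omega
    have hb2 : a + 2 ≤ N := by omega
    by_cases good : ∃ k, a < k ∧ k < N ∧ (c k).1 = κ N
    case pos =>
      obtain ⟨k₀, hk₀a, hk₀b, hk₀κ⟩ := good
      set col := c k₀ with hcol
      have hcolQ : col ∈ Q := Hcol k₀ hk₀a hk₀b
      have hQpos : 1 ≤ Q.card := Finset.card_pos.mpr ⟨col, hcolQ⟩
      set Q' := Q.erase col with hQ'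
      have hQ'card : Q'.card = Q.card - 1 := Finset.card_erase_of_mem hcolQ
      set F : Finset ℕ := (Finset.Ioo a N).filter (fun k => c k = col) with hF
      have hFmem : ∀ k, k ∈ F ↔ (a < k ∧ k < N ∧ c k = col) := by
        intro k
        simp [hF, Finset.mem_filter, Finset.mem_Ioo, and_assoc]
      have hFne : F.Nonempty := ⟨k₀, (hFmem k₀).mpr ⟨hk₀a, hk₀b, rfl⟩⟩
      set i₁ := F.min' hFne with hi₁
      set l := F.max' hFne with hl
      obtain ⟨hi₁a, hi₁b, hi₁c⟩ := (hFmem i₁).mp (F.min'_mem hFne)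
      obtain ⟨hla, hlb, hlc⟩ := (hFmem l).mp (F.max'_mem hFne)
      have hil : i₁ ≤ l := F.min'_le l (F.max'_mem hFne)
      set Hr := h0 + 3 * Q'.card with hHr
      have subIH : ∀ x y, a ≤ x → x < y → y ≤ l → (∀ k, x < k → k < y → c k ≠ col) →
          HasForest α (seg v x y) Hr := by
        intro x y hx hxy hyb hnocol
        refine (thin α v N c κ ee h0 Hκ HA Q'.card Q' x y (le_refl _) hxy (by omega)
          (fun i hi1 hi2 => Hblock i (by omega) (by omega)) ?_).1
        intro k h1 h2
        exact Finset.mem_erase.mpr ⟨hnocol k h1 h2, Hcol k (by omega) (by omega)⟩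
      have chain : ∀ fuel a', l - a' ≤ fuel → a < a' → a' ≤ l → c a' = col →
          ∃ ws : List (List A), ws.flatten = seg v a' l ∧
            ∀ u ∈ ws, α u = ee col ∧ HasForest α u Hr := by
        intro fuel
        induction fuel with
        | zero =>
          intro a' hf h1 h2 h3
          have : a' = l := by omega
          subst this
          exact ⟨[], by simp [seg_self], by simp⟩
        | succ fuel ihf =>
          intro a' hf h1 h2 h3
          by_cases heq : a' = l
          · subst heq
            exact ⟨[], by simp [seg_self], by simp⟩
          have hal : a' < l := by omega
          set F' := F.filter (fun k => a' < k) with hF'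
          have hlF' : l ∈ F' := by
            rw [hF', Finset.mem_filter]
            exact ⟨F.max'_mem hFne, hal⟩
          have hF'ne : F'.Nonempty := ⟨l, hlF'⟩
          set k₁ := F'.min' hF'ne with hk₁
          have hk₁F' : k₁ ∈ F' := F'.min'_mem hF'ne
          have hk₁F : k₁ ∈ F := (Finset.mem_filter.mp hk₁F').1
          have hk₁a' : a' < k₁ := (Finset.mem_filter.mp hk₁F').2
          obtain ⟨hk₁a, hk₁b, hk₁c⟩ := (hFmem k₁).mp hk₁F
          have hk₁l : k₁ ≤ l := F'.min'_le l hlF'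
          have hnocol : ∀ k, a' < k → k < k₁ → c k ≠ col := by
            intro k h1' h2' hc
            have hkF : k ∈ F := (hFmem k).mpr ⟨by omega, by omega, hc⟩
            have hkF' : k ∈ F' := by
              rw [hF', Finset.mem_filter]; exact ⟨hkF, h1'⟩
            have := F'.min'_le k hkF'
            omega
          have hval := HA a' k₁ (by omega) hk₁a' (by omega)
            (by rw [Hκ k₁ (by omega) (by omega), hk₁c, h3])
          rw [h3] at hval
          have hforest : HasForest α (seg v a' k₁) Hr :=
            subIH a' k₁ (by omega) hk₁a' (by omega) hnocol
          obtain ⟨ws', hws'flat, hws'mem⟩ := ihf k₁ (by omega) (by omega) hk₁l hk₁c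
          refine ⟨seg v a' k₁ :: ws', ?_, ?_⟩
          · rw [List.flatten_cons, hws'flat, seg_append v (le_of_lt hk₁a') hk₁l]
          · intro u hu
            rcases List.mem_cons.mp hu with h | h
            · subst h; exact ⟨hval.1, hforest⟩
            · exact hws'mem u h
      set Hf := max (h0 + 1) (h0 + 3 * Q'.card) with hHf
      -- final fat chunk (l, N]
      have hcl : (c l).1 = κ N := by rw [hlc]; exact hk₀κ
      have hfin := HA l N (by omega) hlb (le_refl N) hcl.symm
      rw [hlc] at hfin
      have hfinF : HasForest α (seg v l N) Hf := by
        refine (IH Q' l (by omega) hlb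
          (fun i hi1 hi2 => Hblock i (by omega) hi2) Hlast ?_).1
        intro k h1 h2
        refine Finset.mem_erase.mpr ⟨?_, Hcol k (by omega) h2⟩
        intro hc
        have hkF : k ∈ F := (hFmem k).mpr ⟨by omega, h2, hc⟩
        have := F.le_max' k hkF
        omega
      obtain ⟨ws, hwsflat, hwsmem⟩ := chain (l - i₁) i₁ (le_refl _) hi₁a hil hi₁c
      have hidemnode : HasForest α (seg v i₁ N) (Hf + 1) := by
        have hnode := HasForest.idem (ee col) hfin.2 (ws ++ [seg v l N]) Hf
          (by
            intro u hu
            rcases List.mem_append.mp hu with h | h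
            · exact (hwsmem u h).1
            · rw [List.mem_singleton.mp h]; exact hfin.1)
          (by
            intro u hu
            rcases List.mem_append.mp hu with h | h
            · exact forest_mono (hwsmem u h).2 (by omega)
            · rw [List.mem_singleton.mp h]; exact hfinF)
        have hflat : (ws ++ [seg v l N]).flatten = seg v i₁ N := by
          rw [List.flatten_append, hwsflat]
          simp only [List.flatten_cons, List.flatten_nil, List.append_nil]
          exact seg_append v hil (le_of_lt hlb)
        rwa [hflat] at hnode
      have hP : HasForest α (seg v a i₁) Hr := by
        refine subIH a i₁ (le_refl a) hi₁a hil ?_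
        intro k h1 h2 hc
        have hkF : k ∈ F := (hFmem k).mpr ⟨h1, by omega, hc⟩
        have := F.min'_le k hkF
        omega
      have hbin : HasForest α (seg v a N) (Hf + 2) := by
        have := HasForest.binary _ _ (Hf + 1) (forest_mono hP (by omega)) hidemnode
        rwa [seg_append v (le_of_lt hi₁a) (by omega)] at this
      constructor
      · exact forest_mono hbin (by omega)
      · intro h2Q _
        exact forest_mono hbin (by omega)
    case neg =>
      set col := c (a+1) with hcol
      have haN1 : a + 1 < N := by omega
      have hcolQ : col ∈ Q := Hcol (a+1) (by omega) haN1
      have hQpos : 1 ≤ Q.card := Finset.card_pos.mpr ⟨col, hcolQ⟩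
      set Q' := Q.erase col with hQ'
      have hQ'card : Q'.card = Q.card - 1 := Finset.card_erase_of_mem hcolQ
      set F : Finset ℕ := (Finset.Ioo a N).filter (fun k => c k = col) with hF
      have hFmem : ∀ k, k ∈ F ↔ (a < k ∧ k < N ∧ c k = col) := by
        intro k
        simp [hF, Finset.mem_filter, Finset.mem_Ioo, and_assoc]
      have hFne : F.Nonempty := ⟨a+1, (hFmem (a+1)).mpr ⟨by omega, haN1, rfl⟩⟩
      set i₁ := F.min' hFne with hi₁
      set l := F.max' hFne with hl
      obtain ⟨hi₁a, hi₁b, hi₁c⟩ := (hFmem i₁).mp (F.min'_mem hFne)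
      obtain ⟨hla, hlb, hlc⟩ := (hFmem l).mp (F.max'_mem hFne)
      have hil : i₁ ≤ l := F.min'_le l (F.max'_mem hFne)
      set Hr := h0 + 3 * Q'.card with hHr
      have subIH : ∀ x y, a ≤ x → x < y → y ≤ l → (∀ k, x < k → k < y → c k ≠ col) →
          HasForest α (seg v x y) Hr := by
        intro x y hx hxy hyb hnocol
        refine (thin α v N c κ ee h0 Hκ HA Q'.card Q' x y (le_refl _) hxy (by omega)
          (fun i hi1 hi2 => Hblock i (by omega) (by omega)) ?_).1
        intro k h1 h2
        exact Finset.mem_erase.mpr ⟨hnocol k h1 h2, Hcol k (by omega) (by omega)⟩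
      have chain : ∀ fuel a', l - a' ≤ fuel → a < a' → a' ≤ l → c a' = col →
          ∃ ws : List (List A), ws.flatten = seg v a' l ∧
            ∀ u ∈ ws, α u = ee col ∧ HasForest α u Hr := by
        intro fuel
        induction fuel with
        | zero =>
          intro a' hf h1 h2 h3
          have : a' = l := by omega
          subst this
          exact ⟨[], by simp [seg_self], by simp⟩
        | succ fuel ihf =>
          intro a' hf h1 h2 h3
          by_cases heq : a' = l
          · subst heq
            exact ⟨[], by simp [seg_self], by simp⟩
          have hal : a' < l := by omega
          set F' := F.filter (fun k => a' < k) with hF'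
          have hlF' : l ∈ F' := by
            rw [hF', Finset.mem_filter]
            exact ⟨F.max'_mem hFne, hal⟩
          have hF'ne : F'.Nonempty := ⟨l, hlF'⟩
          set k₁ := F'.min' hF'ne with hk₁
          have hk₁F' : k₁ ∈ F' := F'.min'_mem hF'ne
          have hk₁F : k₁ ∈ F := (Finset.mem_filter.mp hk₁F').1
          have hk₁a' : a' < k₁ := (Finset.mem_filter.mp hk₁F').2
          obtain ⟨hk₁a, hk₁b, hk₁c⟩ := (hFmem k₁).mp hk₁F
          have hk₁l : k₁ ≤ l := F'.min'_le l hlF'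
          have hnocol : ∀ k, a' < k → k < k₁ → c k ≠ col := by
            intro k h1' h2' hc
            have hkF : k ∈ F := (hFmem k).mpr ⟨by omega, by omega, hc⟩
            have hkF' : k ∈ F' := by
              rw [hF', Finset.mem_filter]; exact ⟨hkF, h1'⟩
            have := F'.min'_le k hkF'
            omega
          have hval := HA a' k₁ (by omega) hk₁a' (by omega)
            (by rw [Hκ k₁ (by omega) (by omega), hk₁c, h3])
          rw [h3] at hval
          have hforest : HasForest α (seg v a' k₁) Hr :=
            subIH a' k₁ (by omega) hk₁a' (by omega) hnocol
          obtain ⟨ws', hws'flat, hws'mem⟩ := ihf k₁ (by omega) (by omega) hk₁l hk₁c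
          refine ⟨seg v a' k₁ :: ws', ?_, ?_⟩
          · rw [List.flatten_cons, hws'flat, seg_append v (le_of_lt hk₁a') hk₁l]
          · intro u hu
            rcases List.mem_cons.mp hu with h | h
            · subst h; exact ⟨hval.1, hforest⟩
            · exact hws'mem u h
      set Hf := max (h0 + 1) (h0 + 3 * Q'.card) with hHf
      have hP : HasForest α (seg v a i₁) Hr := by
        refine subIH a i₁ (le_refl a) hi₁a hil ?_
        intro k h1 h2 hc
        have hkF : k ∈ F := (hFmem k).mpr ⟨h1, by omega, hc⟩
        have := F.min'_le k hkF
        omega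
      have hS : HasForest α (seg v l N) Hf := by
        refine (IH Q' l (by omega) hlb
          (fun i hi1 hi2 => Hblock i (by omega) hi2) Hlast ?_).1
        intro k h1 h2
        refine Finset.mem_erase.mpr ⟨?_, Hcol k (by omega) h2⟩
        intro hc
        have hkF : k ∈ F := (hFmem k).mpr ⟨by omega, h2, hc⟩
        have := F.le_max' k hkF
        omega
      have hmain : HasForest α (seg v a N) (max (h0 + 1) (h0 + 3 * Q.card)) := by
        by_cases hileq : i₁ = l
        · have hS' : HasForest α (seg v i₁ N) Hf := by rw [hileq]; exact hS
          have := HasForest.binary _ _ Hf (forest_mono hP (by omega)) hS'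
          rw [seg_append v (le_of_lt hi₁a) (le_of_lt hi₁b)] at this
          exact forest_mono this (by omega)
        · have hilt : i₁ < l := by omega
          have hidem := (HA i₁ l (by omega) hilt (by omega)
            (by rw [Hκ l (by omega) (by omega), hlc, hi₁c])).2
          rw [hi₁c] at hidem
          obtain ⟨ws, hwsflat, hwsmem⟩ := chain (l - i₁) i₁ (le_refl _) hi₁a hil hi₁c
          set h₁ := max (Hr + 1) Hf with hh₁
          have hidemnode : HasForest α (seg v i₁ l) (Hr + 1) := by
            have hnode := HasForest.idem (ee col) hidem ws Hr
              (fun u hu => (hwsmem u hu).1) (fun u hu => (hwsmem u hu).2)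
            rwa [hwsflat] at hnode
          have hbin1 : HasForest α (seg v i₁ N) (h₁ + 1) := by
            have := HasForest.binary _ _ h₁ (forest_mono hidemnode (le_max_left _ _))
              (forest_mono hS (le_max_right _ _))
            rwa [seg_append v hil (le_of_lt hlb)] at this
          have hbin2 : HasForest α (seg v a N) (h₁ + 2) := by
            have := HasForest.binary _ _ (h₁ + 1) (forest_mono hP (by omega)) hbin1
            rwa [seg_append v (le_of_lt hi₁a) (by omega)] at this
          exact forest_mono hbin2 (by omega)
      refine ⟨hmain, ?_⟩
      intro h2Q hex
      exact absurd hex good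


/-! ### Greedy cutting of a word at the J-class of its image -/

theorem cut (α : List A → M) (s : M) :
    ∀ (n : ℕ) (w : List A), w.length ≤ n →
    ∃ (us : List (List A)) (r : List A),
      w = us.flatten ++ r ∧
      (∀ u ∈ us, eqJ (α u) s ∧ ∃ p a, u = p ++ [a] ∧ (p ≠ [] → ¬ eqJ (α p) s)) ∧
      (∀ q, q ≠ [] → q <+: r → ¬ eqJ (α q) s) := by
  intro n
  induction n with
  | zero =>
    intro w hw
    have : w = [] := List.length_eq_zero_iff.mp (by omega)
    subst this
    refine ⟨[], [], by simp, by simp, ?_⟩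
    intro q hq hpre
    exact absurd (List.prefix_nil.mp hpre) hq
  | succ n IHn =>
    intro w hw
    classical
    by_cases hex : ∃ k, 1 ≤ k ∧ k ≤ w.length ∧ eqJ (α (w.take k)) s
    · set k₀ := Nat.find hex with hk₀def
      obtain ⟨hk₀1, hk₀len, hk₀J⟩ := Nat.find_spec hex
      set q : List A := w.take k₀ with hq
      set w' : List A := w.drop k₀ with hw'
      have hqw : q ++ w' = w := List.take_append_drop k₀ w
      have hqlen : q.length = k₀ := by
        rw [hq, List.length_take]
        omega
      have hqne : q ≠ [] := by
        intro h
        rw [h] at hqlen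
        simp at hqlen
        omega
      have hw'len : w'.length ≤ n := by
        rw [hw', List.length_drop]
        omega
      obtain ⟨us', r', hflat', hus', hr'⟩ := IHn w' hw'len
      set p : List A := q.dropLast with hp
      have hqpa : q = p ++ [q.getLast hqne] := by
        rw [hp]
        exact (List.dropLast_append_getLast hqne).symm
      have hpval : p ≠ [] → ¬ eqJ (α p) s := by
        intro hpne
        have hplen : p.length = k₀ - 1 := by
          rw [hp, List.length_dropLast, hqlen]
        have hptake : p = w.take (k₀ - 1) := by
          rw [hp, hq, List.dropLast_eq_take, List.take_take, List.length_take]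
          congr 1
          omega
        have hp1 : 1 ≤ k₀ - 1 := by
          have : p.length ≠ 0 := fun h => hpne (List.length_eq_zero_iff.mp h)
          omega
        have := Nat.find_min hex (m := k₀ - 1) (by omega)
        intro hcon
        exact this ⟨hp1, by omega, by rw [← hptake]; exact hcon⟩
      refine ⟨q :: us', r', ?_, ?_, hr'⟩
      · rw [List.flatten_cons, List.append_assoc, ← hflat', hqw]
      · intro u hu
        rcases List.mem_cons.mp hu with h | h
        · subst h
          exact ⟨hk₀J, p, q.getLast hqne, hqpa, hpval⟩
        · exact hus' u h
    · refine ⟨[], w, by simp, by simp, ?_⟩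
      intro q hqne hpre hcon
      have hqtake : q = w.take q.length := List.prefix_iff_eq_take.mp hpre
      have hq1 : 1 ≤ q.length := by
        have : q.length ≠ 0 := fun h => hqne (List.length_eq_zero_iff.mp h)
        omega
      exact hex ⟨q.length, hq1, hpre.length_le, by rw [← hqtake]; exact hcon⟩


theorem seg_getD {A : Type} (us : List (List A)) :
    seg (fun i => us.getD i []) 0 us.length = us.flatten := by
  induction us using List.reverseRecOn with
  | nil => simp [seg_self]
  | append_singleton us u ih =>
    have hlen : (us ++ [u]).length = us.length + 1 := by simp
    rw [hlen]
    have h1 : seg (fun i => (us ++ [u]).getD i []) 0 (us.length + 1) =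
        seg (fun i => (us ++ [u]).getD i []) 0 us.length ++
          seg (fun i => (us ++ [u]).getD i []) us.length (us.length + 1) :=
      (seg_append _ (Nat.zero_le _) (Nat.le_succ _)).symm
    rw [h1, seg_single]
    have h2 : seg (fun i => (us ++ [u]).getD i []) 0 us.length =
        seg (fun i => us.getD i []) 0 us.length := by
      unfold seg
      apply congrArg
      apply List.map_congr_left
      intro i hi
      have hilt : i < us.length := (List.Ico.mem.mp hi).2
      simp [List.getD, List.getElem?_append_left hilt]
    have h3 : (us ++ [u]).getD us.length [] = u := by
      simp [List.getD]
    rw [h2, h3, ih]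
    rw [List.flatten_append, List.flatten_cons, List.flatten_nil, List.append_nil]


open scoped Classical in
theorem main (α : List A → M) (hmul : ∀ u v : List A, α (u ++ v) = α u * α v) :
    ∀ (d : ℕ) (w : List A), w ≠ [] →
      (Finset.univ.filter (fun t => leJ (α w) t)).card ≤ d →
      HasForest α w (3 * d - 1) := by
  intro d
  induction d using Nat.strong_induction_on with
  | _ d IHd =>
  intro w hw hd
  classical
  set s := α w with hs
  set J : Finset M := Finset.univ.filter (fun t => eqJ t s) with hJdef
  have hmemJ : ∀ t, t ∈ J ↔ eqJ t s := by intro t; simp [hJdef]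
  set j := J.card with hjdef
  have hsJ : s ∈ J := (hmemJ s).mpr (eqJ.refl s)
  have hjpos : 1 ≤ j := Finset.card_pos.mpr ⟨s, hsJ⟩
  set Dst : Finset M := Finset.univ.filter (fun t => leJ s t) with hDst
  have hmemD : ∀ t, t ∈ Dst ↔ leJ s t := by intro t; simp [hDst]
  have hJD : J ⊆ Dst := fun t ht => (hmemD t).mpr ((hmemJ t).mp ht).2
  have hjd : j ≤ Dst.card := Finset.card_le_card hJD
  have hdd : Dst.card ≤ d := hd
  -- strictly J-above elements have small D-sets
  have habove : ∀ x : M, leJ s x → ¬ eqJ x s →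
      (Finset.univ.filter (fun t => leJ x t)).card ≤ d - j := by
    intro x h1 h2
    have hsub : (Finset.univ.filter (fun t => leJ x t)) ⊆ Dst \ J := by
      intro t ht
      rw [Finset.mem_filter] at ht
      have hxt : leJ x t := ht.2
      rw [Finset.mem_sdiff]
      constructor
      · exact (hmemD t).mpr (h1.trans hxt)
      · intro htJ
        have hts : leJ t s := ((hmemJ t).mp htJ).1
        exact h2 ⟨hxt.trans hts, h1⟩
    calc (Finset.univ.filter (fun t => leJ x t)).card ≤ (Dst \ J).card :=
          Finset.card_le_card hsub
      _ = Dst.card - j := by rw [Finset.card_sdiff_of_subset hJD]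
      _ ≤ d - j := by omega
  have habove1 : ∀ x : M, 1 ≤ (Finset.univ.filter (fun t => leJ x t)).card := by
    intro x
    exact Finset.card_pos.mpr ⟨x, by simp [leJ.refl]⟩
  have hrec : ∀ p : List A, p ≠ [] → leJ s (α p) → ¬ eqJ (α p) s →
      HasForest α p (3 * (d - j) - 1) := by
    intro p hp h1 h2
    exact IHd (d - j) (by omega) p hp (habove _ h1 h2)
  have hdj1 : ∀ p : List A, leJ s (α p) → ¬ eqJ (α p) s → 1 ≤ d - j := by
    intro p h1 h2
    have := habove _ h1 h2
    have := habove1 (α p)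
    omega
  -- cut the word
  obtain ⟨us, r, hwflat, hus, hr⟩ := cut α s w.length w (le_refl _)
  set n := us.length with hn
  have hn1 : 1 ≤ n := by
    rcases us with _ | ⟨u, us'⟩
    · exfalso
      simp only [List.flatten_nil, List.nil_append] at hwflat
      exact hr w hw (by rw [hwflat]) (eqJ.refl s)
    · simp [hn]
  have hinfix : ∀ (x y z : List A), w = x ++ (y ++ z) → leJ s (α y) := by
    intro x y z hxyz
    refine ⟨α x, α z, ?_⟩
    rw [hs, hxyz, hmul, hmul, mul_assoc]
  -- bound for interior blocks
  have hblockF : ∀ u ∈ us, HasForest α u (3 * (d - j)) := by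
    intro u hu
    obtain ⟨hueqJ, p, b, hupa, hpcond⟩ := (hus u hu).imp id id
    obtain ⟨pre, post, hsplit⟩ := List.append_of_mem hu
    by_cases hpe : p = []
    · subst hpe
      simp only [List.nil_append] at hupa
      rw [hupa]
      exact forest_mono (HasForest.letter b _) (le_refl _)
    · have hwdecomp : w = pre.flatten ++ (p ++ ([b] ++ (post.flatten ++ r))) := by
        rw [hwflat, hsplit, List.flatten_append, List.flatten_cons, hupa]
        simp [List.append_assoc]
      have h1 : leJ s (α p) := hinfix _ _ _ hwdecomp
      have h2 : ¬ eqJ (α p) s := hpcond hpe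
      have hdj : 1 ≤ d - j := hdj1 p h1 h2
      have hP := hrec p hpe h1 h2
      have hbin := HasForest.binary p [b] (3 * (d - j) - 1) hP (HasForest.letter b _)
      rw [← hupa] at hbin
      exact forest_mono hbin (by omega)
  -- bound for the residue
  have hrF : HasForest α r (3 * (d - j)) := by
    by_cases hre : r = []
    · subst hre; exact HasForest.empty _
    · have h1 : leJ s (α r) := by
        refine hinfix us.flatten r [] ?_
        rw [hwflat]; simp
      have h2 : ¬ eqJ (α r) s := hr r hre (List.prefix_refl r)
      exact forest_mono (hrec r hre h1 h2) (by omega)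
  by_cases hj1 : j = 1
  · -- singleton J-class
    have hJs : ∀ t, eqJ t s → t = s := by
      intro t ht
      obtain ⟨x, hx⟩ := Finset.card_eq_one.mp (hjdef ▸ hj1)
      have h1 : t ∈ J := (hmemJ t).mpr ht
      have h2 : s ∈ J := hsJ
      rw [hx, Finset.mem_singleton] at h1 h2
      rw [h1, h2]
    have husval : ∀ u ∈ us, α u = s := fun u hu => hJs _ (hus u hu).1
    rcases us with _ | ⟨u₁, us'⟩
    · rw [hn] at hn1; simp at hn1
    rcases us' with _ | ⟨u₂, us''⟩
    · -- single block
      simp only [List.flatten_cons, List.flatten_nil, List.append_nil] at hwflat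
      have hbin := HasForest.binary u₁ r (3 * (d - j))
        (hblockF u₁ (by simp)) hrF
      rw [← hwflat] at hbin
      exact forest_mono hbin (by omega)
    · -- at least two blocks: s is idempotent
      have hss : s * s = s := by
        have h12 : α (u₁ ++ u₂) = s * s := by
          rw [hmul, husval u₁ (by simp), husval u₂ (by simp)]
        have hle1 : leJ (s * s) s := ⟨1, s, by simp⟩
        have hle2 : leJ s (α (u₁ ++ u₂)) := by
          refine hinfix [] (u₁ ++ u₂) (us''.flatten ++ r) ?_
          rw [hwflat]
          simp [List.append_assoc]
        rw [h12] at hle2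
        exact hJs (s * s) ⟨hle1, hle2⟩
      have hidem := HasForest.idem s hss (u₁ :: u₂ :: us'') (3 * (d - j))
        husval hblockF
      have hbin := HasForest.binary _ r (3 * (d - j) + 1) hidem
        (forest_mono hrF (by omega))
      rw [← hwflat] at hbin
      exact forest_mono hbin (by omega)
  · -- j ≥ 2 : main case
    have hj2 : 2 ≤ j := by omega
    set v : ℕ → List A := fun i => if i = n - 1 then us.getD i [] ++ r else us.getD i [] with hv
    have hgetmem : ∀ i, i < n → us.getD i [] ∈ us := by
      intro i hi
      rw [List.getD_eq_getElem us [] (by omega)]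
      exact List.getElem_mem _
    have hvlt : ∀ i, i < n - 1 → v i = us.getD i [] := by
      intro i hi
      simp only [hv, if_neg (by omega : ¬ i = n - 1)]
    have hvlast : v (n-1) = us.getD (n-1) [] ++ r := by simp [hv]
    set v0 : ℕ → List A := fun i => us.getD i [] with hv0
    have hseg_lt : seg v 0 (n-1) = seg v0 0 (n-1) := by
      unfold seg
      apply congrArg
      apply List.map_congr_left
      intro i hi
      exact hvlt i (List.Ico.mem.mp hi).2
    have hsegvlast : seg v (n-1) n = v (n-1) := by
      have hN : n - 1 + 1 = n := by omega
      have := seg_single v (n-1)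
      rwa [hN] at this
    have hsegv0last : seg v0 (n-1) n = v0 (n-1) := by
      have hN : n - 1 + 1 = n := by omega
      have := seg_single v0 (n-1)
      rwa [hN] at this
    have hsegv0 : seg v0 0 n = us.flatten := by
      have := seg_getD us
      rw [← hn] at this
      exact this
    have hseg0 : seg v 0 n = w := by
      rw [← seg_append v (Nat.zero_le (n-1)) (by omega : n - 1 ≤ n), hseg_lt, hsegvlast,
        hvlast, ← List.append_assoc]
      have h1 : seg v0 0 (n-1) ++ us.getD (n-1) [] = us.flatten := by
        rw [← hsegv0, ← seg_append v0 (Nat.zero_le (n-1)) (by omega : n - 1 ≤ n), hsegv0last]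
      rw [h1, ← hwflat]
    set κ : ℕ → M := fun k => α (seg v 0 k) with hκv
    have hκn : κ n = s := by
      show α (seg v 0 n) = s
      rw [hseg0]
    have hsegmul : ∀ x y z : ℕ, x ≤ y → y ≤ z →
        α (seg v x z) = α (seg v x y) * α (seg v y z) := by
      intro x y z h1 h2
      rw [← seg_append v h1 h2, hmul]
    have Ht : ∀ i, i < n → eqJ (α (v i)) s := by
      intro i hi
      by_cases hlt : i < n - 1
      · rw [hvlt i hlt]
        exact (hus _ (hgetmem i (by omega))).1
      · have hieq : i = n - 1 := by omega
        subst hieq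
        constructor
        · have h1 : leJ (α (v (n-1))) (α (us.getD (n-1) [])) :=
            ⟨1, α r, by rw [hvlast, hmul, one_mul]⟩
          exact h1.trans (hus _ (hgetmem (n-1) (by omega))).1.1
        · refine ⟨α (seg v 0 (n-1)), 1, ?_⟩
          rw [mul_one, hs, ← hseg0, hsegmul 0 (n-1) n (Nat.zero_le _) (by omega), hsegvlast]
    have Hκf : ∀ k, 1 ≤ k → k ≤ n → eqJ (κ k) s ∧ eqR (κ k) (α (v 0)) := by
      intro k h1 h2
      have hk1 : κ k = α (v 0) * α (seg v 1 k) := by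
        show α (seg v 0 k) = α (v 0) * α (seg v 1 k)
        rw [hsegmul 0 1 k (by omega) h1]
        congr 1
        rw [show (1:ℕ) = 0 + 1 from rfl, seg_single]
      have hle1 : leR (κ k) (α (v 0)) := ⟨α (seg v 1 k), hk1⟩
      have hle2 : leJ (κ k) s := hle1.toJ.trans (Ht 0 (by omega)).1
      have hle3 : leJ s (κ k) := by
        refine ⟨1, α (seg v k n), ?_⟩
        rw [hs, ← hseg0, hsegmul 0 k n (by omega) h2, one_mul]
      have heqJ : eqJ (κ k) s := ⟨hle2, hle3⟩
      have hle4 : leJ (α (v 0)) (κ k) := (Ht 0 (by omega)).1.trans hle3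
      exact ⟨heqJ, ⟨hle1, stabR hle1 hle4⟩⟩
    set c : ℕ → M × Finset M := fun k => (κ k, Rcl (α (v k))) with hc
    set ee : M × Finset M → M := fun col => Jeps col.1 col.2 with hee
    have HA : ∀ i j', 1 ≤ i → i < j' → j' ≤ n → κ j' = (c i).1 →
        α (seg v i j') = ee (c i) ∧ ee (c i) * ee (c i) = ee (c i) := by
      intro i j' h1 h2 h3 hκeq
      have hκeq' : κ j' = κ i := hκeq
      set x := α (seg v i j') with hx
      have hqx : κ i * x = κ i := by
        have hstep : κ j' = κ i * x := hsegmul 0 i j' (by omega) (le_of_lt h2)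
        rw [← hstep, hκeq']
      have hxvi : leR x (α (v i)) := by
        refine ⟨α (seg v (i+1) j'), ?_⟩
        rw [hx, hsegmul i (i+1) j' (by omega) (by omega), seg_single]
      have hiJ : eqJ (α (v i)) s := Ht i (by omega)
      have hκiJ : eqJ (κ i) s := (Hκf i h1 (by omega)).1
      have hxs1 : leJ x s := hxvi.toJ.trans hiJ.1
      have hLκx : leL (κ i) x := ⟨κ i, hqx.symm⟩
      have hxs2 : leJ s x := hκiJ.2.trans hLκx.toJ
      have hxJ : eqJ x s := ⟨hxs1, hxs2⟩
      have hxvi2 : eqR x (α (v i)) := ⟨hxvi, stabR hxvi (hiJ.1.trans hxJ.2)⟩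
      have hLxκ : leL x (κ i) := stabL hLκx (hxJ.1.trans hκiJ.2)
      have hxidem : x * x = x := by
        obtain ⟨u, hu⟩ := hLxκ
        calc x * x = u * (κ i * x) := by rw [hu, mul_assoc]
          _ = u * κ i := by rw [hqx]
          _ = x := hu.symm
      have hρ : ∀ y z : M, y ∈ Rcl (α (v i)) → z ∈ Rcl (α (v i)) → eqR y z := by
        intro y z hy hz
        exact (mem_Rcl.mp hy).trans (mem_Rcl.mp hz).symm
      have hJE : Jeps (κ i) (Rcl (α (v i))) = x :=
        Jeps_eq hρ ⟨hxidem, ⟨hLxκ, hLκx⟩, mem_Rcl.mpr hxvi2⟩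
      have hJE' : ee (c i) = x := hJE
      exact ⟨hJE'.symm, by rw [hJE']; exact hxidem⟩
    have Hκl : ∀ k, 1 ≤ k → k < n → κ k = (c k).1 := fun k _ _ => rfl
    have Hblocks : ∀ i, 0 ≤ i → i < n - 1 → HasForest α (v i) (3*(d-j)) := by
      intro i _ hi
      rw [hvlt i hi]
      exact hblockF _ (hgetmem i (by omega))
    have Hlast : HasForest α (v (n-1)) (3*(d-j) + 1) := by
      rw [hvlast]
      exact HasForest.binary _ _ _ (hblockF _ (hgetmem (n-1) (by omega))) hrF
    set Q := (Finset.Ico 1 n).image c with hQ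
    have HQ : ∀ k, 0 < k → k < n → c k ∈ Q :=
      fun k h1 h2 => Finset.mem_image.mpr ⟨k, Finset.mem_Ico.mpr ⟨h1, h2⟩, rfl⟩
    set RS := J.image Rcl with hRS
    have hQsub : Q ⊆ (Rcl (α (v 0))) ×ˢ RS := by
      intro x hx
      obtain ⟨k, hk, rfl⟩ := Finset.mem_image.mp hx
      obtain ⟨hk1, hk2⟩ := Finset.mem_Ico.mp hk
      rw [Finset.mem_product]
      exact ⟨mem_Rcl.mpr (Hκf k hk1 (le_of_lt hk2)).2,
        Finset.mem_image.mpr ⟨α (v k), (hmemJ _).mpr (Ht k hk2), rfl⟩⟩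
    have hdisj : ∀ ρ ∈ RS, ∀ ρ' ∈ RS, ρ ≠ ρ' → Disjoint ρ ρ' := by
      intro ρ hρ ρ' hρ' hne
      rw [Finset.disjoint_left]
      intro x hx hx'
      obtain ⟨t, ht, hteq⟩ := Finset.mem_image.mp hρ
      obtain ⟨t', ht', hteq'⟩ := Finset.mem_image.mp hρ'
      rw [← hteq] at hx
      rw [← hteq'] at hx'
      exact hne (by rw [← hteq, ← hteq',
        Rcl_eq_of_eqR ((mem_Rcl.mp hx).symm.trans (mem_Rcl.mp hx'))])
    have hbiUsub : RS.biUnion id ⊆ J := by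
      intro y hy
      obtain ⟨ρ, hρ, hyρ⟩ := Finset.mem_biUnion.mp hy
      obtain ⟨t, ht, hteq⟩ := Finset.mem_image.mp hρ
      rw [← hteq] at hyρ
      have hyt : eqR y t := mem_Rcl.mp hyρ
      exact (hmemJ y).mpr (hyt.toJ.trans ((hmemJ t).mp ht))
    have hperR : ∀ ρ ∈ RS, (Rcl (α (v 0))).card ≤ (id ρ).card := by
      intro ρ hρ
      obtain ⟨t, ht, hteq⟩ := Finset.mem_image.mp hρ
      rw [← hteq]
      exact card_Rcl_le ((Ht 0 (by omega)).trans ((hmemJ t).mp ht).symm)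
    have hcount : (Rcl (α (v 0))).card * RS.card ≤ j := by
      calc (Rcl (α (v 0))).card * RS.card = RS.card • (Rcl (α (v 0))).card := by
            rw [smul_eq_mul, mul_comm]
        _ ≤ ∑ ρ ∈ RS, (id ρ).card := Finset.card_nsmul_le_sum RS _ _ hperR
        _ = (RS.biUnion id).card := (Finset.card_biUnion hdisj).symm
        _ ≤ j := Finset.card_le_card hbiUsub
    have hprodcard : ((Rcl (α (v 0))) ×ˢ RS).card ≤ j := by
      rw [Finset.card_product]
      exact hcount
    have hQj : Q.card ≤ j := le_trans (Finset.card_le_card hQsub) hprodcard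
    have hfat := fat α v n c κ ee (3*(d-j)) Hκl HA Q.card Q 0 (le_refl _) (by omega)
      (fun i _ hi => Hblocks i (Nat.zero_le i) hi) Hlast (fun k h1 h2 => HQ k h1 h2)
    by_cases hgood : ∃ k, 0 < k ∧ k < n ∧ (c k).1 = κ n
    · by_cases hQ2 : 2 ≤ Q.card
      · have hres := hfat.2 hQ2 hgood
        rw [hseg0] at hres
        exact forest_mono hres (by omega)
      · have hres := hfat.1
        rw [hseg0] at hres
        exact forest_mono hres (by omega)
    · have hQlt : Q.card < j := by
        by_contra hge
        have hcardle : ((Rcl (α (v 0))) ×ˢ RS).card ≤ Q.card := by omega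
        have hQeq : ((Rcl (α (v 0))) ×ˢ RS) = Q :=
          (Finset.eq_of_subset_of_card_le hQsub hcardle).symm
        have hsmem : (s, Rcl (α (v 0))) ∈ (Rcl (α (v 0))) ×ˢ RS := by
          rw [Finset.mem_product]
          constructor
          · have h := (Hκf n (by omega) (le_refl n)).2
            rw [hκn] at h
            exact mem_Rcl.mpr h
          · exact Finset.mem_image.mpr ⟨α (v 0), (hmemJ _).mpr (Ht 0 (by omega)), rfl⟩
        rw [hQeq] at hsmem
        obtain ⟨k, hk, hck⟩ := Finset.mem_image.mp hsmem
        obtain ⟨hk1, hk2⟩ := Finset.mem_Ico.mp hk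
        exact hgood ⟨k, hk1, hk2, by rw [hck, hκn]⟩
      have hres := hfat.1
      rw [hseg0] at hres
      exact forest_mono hres (by omega)

end SFF

/-- Simon's Factorization Forest Theorem. -/
theorem stmt_8 {A M : Type} [Monoid M] [Fintype M] (α : List A → M)
    (hone : α [] = 1) (hmul : ∀ u v : List A, α (u ++ v) = α u * α v) :
    ∀ w : List A, HasForest α w (3 * Fintype.card M - 1) := by
  intro w
  by_cases hw : w = []
  · subst hw
    exact HasForest.empty _
  · classical
    exact SFF.main α hmul (Fintype.card M) w hw
      (le_trans (Finset.card_filter_le _ _) (le_of_eq Finset.card_univ))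
end

section
/- Let C be a lattice of languages, M a finite monoid, α : A* → M surjective. For any F ⊆ M: α⁻¹(F) ∈ C if and only if F is an upper set for the saturated C-pair relation (i.e., s ∈ F and (s,t) a saturated C-pair imply t ∈ F). -/
/-- `(s,t)` is a saturated `C`-pair for `α`. -/
def SatCPair {A M : Type} (C : Set (Set (List A))) (α : List A → M) (s t : M) : Prop :=
  ¬ ∃ F : Set M, α ⁻¹' F ∈ C ∧ α ⁻¹' {s} ⊆ α ⁻¹' F ∧ α ⁻¹' F ∩ α ⁻¹' {t} = ∅

lemma biInter_memC {A ι : Type} [DecidableEq ι] (C : Set (Set (List A)))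
    (huniv : (Set.univ : Set (List A)) ∈ C)
    (hinter : ∀ K L : Set (List A), K ∈ C → L ∈ C → K ∩ L ∈ C)
    (s : Finset ι) (f : ι → Set (List A)) (h : ∀ r ∈ s, f r ∈ C) :
    (⋂ r ∈ s, f r) ∈ C := by
  induction s using Finset.induction_on with
  | empty => simpa using huniv
  | insert _ _ hx ih =>
    rw [Finset.set_biInter_insert]
    exact hinter _ _ (h _ (Finset.mem_insert_self _ _))
      (ih fun r hr => h r (Finset.mem_insert_of_mem hr))

lemma biUnion_memC {A ι : Type} [DecidableEq ι] (C : Set (Set (List A)))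
    (hempty : (∅ : Set (List A)) ∈ C)
    (hunion : ∀ K L : Set (List A), K ∈ C → L ∈ C → K ∪ L ∈ C)
    (s : Finset ι) (f : ι → Set (List A)) (h : ∀ r ∈ s, f r ∈ C) :
    (⋃ r ∈ s, f r) ∈ C := by
  induction s using Finset.induction_on with
  | empty => simpa using hempty
  | insert _ _ hx ih =>
    rw [Finset.set_biUnion_insert]
    exact hunion _ _ (h _ (Finset.mem_insert_self _ _))
      (ih fun r hr => h r (Finset.mem_insert_of_mem hr))

theorem stmt_15 {A M : Type} [Monoid M] [Fintype M]
    (C : Set (Set (List A)))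
    (hempty : (∅ : Set (List A)) ∈ C) (huniv : (Set.univ : Set (List A)) ∈ C)
    (hunion : ∀ K L : Set (List A), K ∈ C → L ∈ C → K ∪ L ∈ C)
    (hinter : ∀ K L : Set (List A), K ∈ C → L ∈ C → K ∩ L ∈ C)
    (α : List A → M)
    (hone : α [] = 1) (hmul : ∀ u v : List A, α (u ++ v) = α u * α v)
    (hsurj : Function.Surjective α)
    (F : Set M) :
    α ⁻¹' F ∈ C ↔ (∀ s ∈ F, ∀ t : M, SatCPair C α s t → t ∈ F) := by
  classical
  constructor
  · intro h s hs t hsat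
    by_contra htF
    exact hsat ⟨F, h,
      fun x hx => by simp only [Set.mem_preimage, Set.mem_singleton_iff] at hx; simp [Set.mem_preimage, hx, hs],
      Set.eq_empty_iff_forall_notMem.2 fun x ⟨hx1, hx2⟩ => by
        simp only [Set.mem_preimage, Set.mem_singleton_iff] at hx1 hx2
        exact htF (hx2 ▸ hx1)⟩
  · intro hup
    have key : ∀ s t : M, ∃ G : Set M, s ∈ F → t ∉ F →
        α ⁻¹' G ∈ C ∧ α ⁻¹' {s} ⊆ α ⁻¹' G ∧ α ⁻¹' G ∩ α ⁻¹' {t} = ∅ := by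
      intro s t
      by_cases hs : s ∈ F
      · by_cases ht : t ∈ F
        · exact ⟨∅, fun _ h => absurd ht h⟩
        · have : ¬ SatCPair C α s t := fun hsat => ht (hup s hs t hsat)
          rw [SatCPair, not_not] at this
          obtain ⟨G, hG⟩ := this
          exact ⟨G, fun _ _ => hG⟩
      · exact ⟨∅, fun h => absurd h hs⟩
    choose G hG using key
    have hFset : α ⁻¹' F =
        ⋃ s ∈ Finset.univ.filter (· ∈ F), ⋂ r ∈ Finset.univ.filter (· ∉ F), α ⁻¹' (G s r) := by
      ext x
      simp only [Set.mem_preimage, Set.mem_iUnion, Set.mem_iInter, Finset.mem_filter,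
        Finset.mem_univ, true_and, exists_prop]
      constructor
      · intro hx
        refine ⟨α x, hx, fun r hr => ?_⟩
        exact (hG (α x) r hx hr).2.1 rfl
      · rintro ⟨s, hs, hall⟩
        by_contra hx
        have h3 := (hG s (α x) hs hx).2.2
        have : x ∈ α ⁻¹' (G s (α x)) ∩ α ⁻¹' {α x} := ⟨hall (α x) hx, rfl⟩
        rw [h3] at this
        exact this
    rw [hFset]
    exact biUnion_memC C hempty hunion _ _ fun s hs =>
      biInter_memC C huniv hinter _ _ fun r hr => by
        simp only [Finset.mem_filter, Finset.mem_univ, true_and] at hs hr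
        exact (hG s r hs hr).1
end

section
/- Let C be a lattice of languages, M a finite monoid, α : A* → M surjective. Then (s,t) is a saturated C-pair if and only if there exist n ∈ ℕ and r₀, …, r_{n+1} ∈ M with r₀ = s, r_{n+1} = t, and (r_i, r_{i+1}) a C-pair for each i ≤ n. In other words, the saturated C-pair relation is the reflexive-transitive closure of the C-pair relation. -/
lemma lat_iInter {A M : Type} [Fintype M] (C : Set (Set (List A)))
    (huniv : (Set.univ : Set (List A)) ∈ C)
    (hinter : ∀ K L : Set (List A), K ∈ C → L ∈ C → K ∩ L ∈ C)
    (f : M → Set (List A)) (hf : ∀ v, f v ∈ C) : (⋂ v, f v) ∈ C := by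
  classical
  have key : ∀ S : Finset M, (⋂ v ∈ S, f v) ∈ C := by
    intro S
    induction S using Finset.induction with
    | empty => simpa using huniv
    | insert _ _ h ih =>
      rw [Finset.set_biInter_insert]
      exact hinter _ _ (hf _) ih
  simpa using key Finset.univ

lemma lat_iUnion {A M : Type} [Fintype M] (C : Set (Set (List A)))
    (hempty : (∅ : Set (List A)) ∈ C)
    (hunion : ∀ K L : Set (List A), K ∈ C → L ∈ C → K ∪ L ∈ C)
    (f : M → Set (List A)) (hf : ∀ v, f v ∈ C) : (⋃ v, f v) ∈ C := by
  classical
  have key : ∀ S : Finset M, (⋃ v ∈ S, f v) ∈ C := by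
    intro S
    induction S using Finset.induction with
    | empty => simpa using hempty
    | insert _ _ h ih =>
      rw [Finset.set_biUnion_insert]
      exact hunion _ _ (hf _) ih
  simpa using key Finset.univ

theorem stmt_16 {A M : Type} [Monoid M] [Fintype M]
    (C : Set (Set (List A)))
    (hempty : (∅ : Set (List A)) ∈ C) (huniv : (Set.univ : Set (List A)) ∈ C)
    (hunion : ∀ K L : Set (List A), K ∈ C → L ∈ C → K ∪ L ∈ C)
    (hinter : ∀ K L : Set (List A), K ∈ C → L ∈ C → K ∩ L ∈ C)
    (α : List A → M)
    (hone : α [] = 1) (hmul : ∀ u v : List A, α (u ++ v) = α u * α v)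
    (hsurj : Function.Surjective α)
    (s t : M) :
    SatCPair C α s t ↔
      ∃ (n : ℕ) (r : ℕ → M), r 0 = s ∧ r (n + 1) = t ∧
        ∀ i ≤ n, CPair C α (r i) (r (i + 1)) := by
  classical
  constructor
  · intro hsat
    by_contra ht
    set F : Set M := {m | ∃ (n : ℕ) (r : ℕ → M), r 0 = s ∧ r (n + 1) = m ∧
        ∀ i ≤ n, CPair C α (r i) (r (i + 1))} with hFdef
    have hCss : ∀ m : M, CPair C α m m := by
      intro m
      rintro ⟨K, hK, hsub, hint⟩
      obtain ⟨w, hw⟩ := hsurj m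
      have hwK : w ∈ K := hsub (by simp [hw])
      have : w ∈ K ∩ α ⁻¹' {m} := ⟨hwK, by simp [hw]⟩
      rw [hint] at this
      exact this
    have hsF : s ∈ F := ⟨0, fun _ => s, rfl, rfl, fun i _ => hCss s⟩
    have htF : t ∉ F := ht
    have hclosed : ∀ u ∈ F, ∀ v, CPair C α u v → v ∈ F := by
      rintro u ⟨n, r, h0, h1, hc⟩ v huv
      refine ⟨n + 1, fun i => if i = n + 2 then v else r i, ?_, ?_, ?_⟩
      · have h02 : (0 : ℕ) ≠ n + 2 := by omega
        simp [h02, h0]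
      · simp
      · intro i hi
        rcases Nat.lt_or_ge i (n + 1) with hlt | hge
        · have h1' : i ≠ n + 2 := by omega
          have h2' : i + 1 ≠ n + 2 := by omega
          simp only [h1', h2', if_false]
          exact hc i (by omega)
        · have hieq : i = n + 1 := by omega
          subst hieq
          have h1' : n + 1 ≠ n + 2 := by omega
          simp only [h1', if_false, if_pos rfl]
          rw [h1]
          exact huv
    have hsep : ∀ u, u ∈ F → ∀ v, v ∉ F →
        ∃ K ∈ C, α ⁻¹' {u} ⊆ K ∧ K ∩ α ⁻¹' {v} = ∅ := by
      intro u hu v hv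
      by_contra h
      exact hv (hclosed u hu v h)
    set H : M → M → Set (List A) := fun u v =>
      if h : u ∈ F ∧ v ∉ F then (hsep u h.1 v h.2).choose else Set.univ with hHdef
    have hHC : ∀ u v, H u v ∈ C := by
      intro u v
      by_cases h : u ∈ F ∧ v ∉ F
      · simp only [hHdef, dif_pos h]
        exact (hsep u h.1 v h.2).choose_spec.1
      · simp only [hHdef, dif_neg h]
        exact huniv
    have hHsub : ∀ u v, α ⁻¹' {u} ⊆ H u v := by
      intro u v
      by_cases h : u ∈ F ∧ v ∉ F
      · simp only [hHdef, dif_pos h]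
        exact (hsep u h.1 v h.2).choose_spec.2.1
      · simp only [hHdef, dif_neg h]
        exact Set.subset_univ _
    have hHdisj : ∀ u v, u ∈ F → v ∉ F → H u v ∩ α ⁻¹' {v} = ∅ := by
      intro u v hu hv
      have h : u ∈ F ∧ v ∉ F := ⟨hu, hv⟩
      simp only [hHdef, dif_pos h]
      exact (hsep u h.1 v h.2).choose_spec.2.2
    set Hu : M → Set (List A) := fun u => ⋂ v, H u v with hHudef
    have hHuC : ∀ u, Hu u ∈ C := fun u =>
      lat_iInter C huniv hinter (H u) (hHC u)
    set K : Set (List A) := ⋃ u, (if u ∈ F then Hu u else ∅) with hKdef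
    have hKC : K ∈ C := by
      apply lat_iUnion C hempty hunion
      intro u
      by_cases h : u ∈ F
      · simpa [h] using hHuC u
      · simpa [h] using hempty
    have hKeq : K = α ⁻¹' F := by
      ext x
      constructor
      · rintro hx
        simp only [hKdef, Set.mem_iUnion] at hx
        obtain ⟨u, hxu⟩ := hx
        by_cases hu : u ∈ F
        · rw [if_pos hu] at hxu
          by_contra hxF
          have hx2 : x ∈ H u (α x) := by
            have := Set.mem_iInter.mp hxu (α x)
            exact this
          have : x ∈ H u (α x) ∩ α ⁻¹' {α x} := ⟨hx2, rfl⟩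
          rw [hHdisj u (α x) hu hxF] at this
          exact this
        · rw [if_neg hu] at hxu
          exact absurd hxu (Set.notMem_empty x)
      · intro hx
        simp only [hKdef, Set.mem_iUnion]
        refine ⟨α x, ?_⟩
        have hx' : α x ∈ F := hx
        rw [if_pos hx']
        exact Set.mem_iInter.mpr fun v => hHsub (α x) v rfl
    apply hsat
    refine ⟨F, ?_, ?_, ?_⟩
    · rw [← hKeq]; exact hKC
    · intro x hx
      simp only [Set.mem_preimage, Set.mem_singleton_iff] at hx
      simp only [Set.mem_preimage, hx]
      exact hsF
    · ext x
      simp only [Set.mem_inter_iff, Set.mem_preimage, Set.mem_singleton_iff,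
        Set.mem_empty_iff_false, iff_false, not_and]
      intro hxF hxt
      exact htF (hxt ▸ hxF)
  · rintro ⟨n, r, h0, h1, hc⟩ ⟨F, hFC, hsF, htF⟩
    have hmemF : ∀ i ≤ n + 1, r i ∈ F := by
      intro i
      induction i with
      | zero =>
        intro _
        obtain ⟨w, hw⟩ := hsurj s
        have : w ∈ α ⁻¹' F := hsF (by simp [hw])
        rw [h0]
        simpa [hw] using this
      | succ i ih =>
        intro hi
        have hiF : r i ∈ F := ih (by omega)
        have hcp := hc i (by omega)
        by_contra hnot
        apply hcp
        refine ⟨α ⁻¹' F, hFC, ?_, ?_⟩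
        · intro x hx
          simp only [Set.mem_preimage, Set.mem_singleton_iff] at hx
          simp only [Set.mem_preimage, hx]
          exact hiF
        · ext x
          simp only [Set.mem_inter_iff, Set.mem_preimage, Set.mem_singleton_iff,
            Set.mem_empty_iff_false, iff_false, not_and]
          intro hxF hxr
          exact hnot (hxr ▸ hxF)
    have htF' : t ∈ F := h1 ▸ hmemF (n + 1) le_rfl
    obtain ⟨w, hw⟩ := hsurj t
    have hw1 : w ∈ α ⁻¹' F ∩ α ⁻¹' {t} := ⟨by simp [hw, htF'], by simp [hw]⟩
    rw [htF] at hw1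
    exact hw1
end

section
/- Let C be a quotienting lattice of regular languages, M a finite monoid, α : A* → M surjective. If (s₁,t₁) and (s₂,t₂) are saturated C-pairs for α, then (s₁s₂, t₁t₂) is a saturated C-pair for α. -/
theorem stmt_17 {A M : Type} [Monoid M] [Fintype M]
    (C : Set (Set (List A)))
    (hreg : ∀ K ∈ C, IsReg K)
    (hempty : (∅ : Set (List A)) ∈ C) (huniv : (Set.univ : Set (List A)) ∈ C)
    (hunion : ∀ K L : Set (List A), K ∈ C → L ∈ C → K ∪ L ∈ C)
    (hinter : ∀ K L : Set (List A), K ∈ C → L ∈ C → K ∩ L ∈ C)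
    (hql : ∀ L ∈ C, ∀ u : List A, {w : List A | u ++ w ∈ L} ∈ C)
    (hqr : ∀ L ∈ C, ∀ u : List A, {w : List A | w ++ u ∈ L} ∈ C)
    (α : List A → M)
    (hone : α [] = 1) (hmul : ∀ u v : List A, α (u ++ v) = α u * α v)
    (hsurj : Function.Surjective α)
    (s₁ t₁ s₂ t₂ : M) (h1 : SatCPair C α s₁ t₁) (h2 : SatCPair C α s₂ t₂) :
    SatCPair C α (s₁ * s₂) (t₁ * t₂) := by
  rintro ⟨F, hF, hsub, hdisj⟩
  -- s₁ * s₂ ∈ F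
  obtain ⟨u, hu⟩ := hsurj (s₁ * s₂)
  have hss : s₁ * s₂ ∈ F := by
    have := hsub (show u ∈ α ⁻¹' {s₁ * s₂} from hu)
    rwa [Set.mem_preimage, hu] at this
  -- Step 1: s₁ * t₂ ∈ F
  obtain ⟨u₀, hu₀⟩ := hsurj s₁
  have hC2 : α ⁻¹' {m | s₁ * m ∈ F} ∈ C := by
    have key : α ⁻¹' {m | s₁ * m ∈ F} = {w : List A | u₀ ++ w ∈ α ⁻¹' F} := by
      ext w
      simp [Set.mem_preimage, hmul, hu₀]
    rw [key]
    exact hql _ hF u₀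
  have hne2 : ¬ (α ⁻¹' {m | s₁ * m ∈ F} ∩ α ⁻¹' {t₂} = ∅) := by
    intro hd
    exact h2 ⟨{m | s₁ * m ∈ F}, hC2, by
      intro w hw
      simp only [Set.mem_preimage, Set.mem_singleton_iff] at hw
      simp [Set.mem_preimage, hw, hss], hd⟩
  obtain ⟨w, hw1, hw2⟩ := Set.nonempty_iff_ne_empty.2 hne2
  simp only [Set.mem_preimage, Set.mem_singleton_iff] at hw1 hw2
  have hst : s₁ * t₂ ∈ F := by rw [← hw2]; exact hw1
  -- Step 2: t₁ * t₂ ∈ F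
  obtain ⟨v₀, hv₀⟩ := hsurj t₂
  have hC1 : α ⁻¹' {m | m * t₂ ∈ F} ∈ C := by
    have key : α ⁻¹' {m | m * t₂ ∈ F} = {w : List A | w ++ v₀ ∈ α ⁻¹' F} := by
      ext w
      simp [Set.mem_preimage, hmul, hv₀]
    rw [key]
    exact hqr _ hF v₀
  have hne1 : ¬ (α ⁻¹' {m | m * t₂ ∈ F} ∩ α ⁻¹' {t₁} = ∅) := by
    intro hd
    exact h1 ⟨{m | m * t₂ ∈ F}, hC1, by
      intro w hw
      simp only [Set.mem_preimage, Set.mem_singleton_iff] at hw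
      simp [Set.mem_preimage, hw, hst], hd⟩
  obtain ⟨w', hw1', hw2'⟩ := Set.nonempty_iff_ne_empty.2 hne1
  simp only [Set.mem_preimage, Set.mem_singleton_iff] at hw1' hw2'
  have htt : t₁ * t₂ ∈ F := by rw [← hw2']; exact hw1'
  -- contradiction with hdisj
  obtain ⟨v, hv⟩ := hsurj (t₁ * t₂)
  have : v ∈ α ⁻¹' F ∩ α ⁻¹' {t₁ * t₂} := ⟨by simp [Set.mem_preimage, hv, htt], hv⟩
  rw [hdisj] at this
  exact this
end

section
/- Let M be a finite monoid satisfying s^{ω+1} = s^ω t s^ω for all pairs (s,t) in a relation R that is compatible with multiplication and reflexive. Then for any chain r₀ = s, r₁, …, r_{n+1} = t with (r_i, r_{i+1}) ∈ R for all i, one has s^{ω+1} = s^ω t s^ω. Consequently, the equation s^{ω+1} = s^ω t s^ω for all C-pairs implies the same equation for all saturated C-pairs. -/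
private lemma idem_pow {M : Type} [Monoid M] {e : M} (he : e * e = e) :
    ∀ k, 1 ≤ k → e ^ k = e := by
  intro k hk
  induction k with
  | zero => omega
  | succ k ih =>
    rcases Nat.eq_or_lt_of_le hk with h1 | h1
    · simp [← h1]
    · rw [pow_succ, ih (by omega), he]

theorem stmt_18 {M : Type} [Monoid M] [Fintype M]
    -- an abstract relation `R` (the `C`-pair relation), reflexive and
    -- compatible with multiplication
    (R : M → M → Prop)
    (hrefl : ∀ s : M, R s s)
    (hmult : ∀ a b c d : M, R a b → R c d → R (a * c) (b * d))
    -- `ω` : a number such that `x^ω` is idempotent for every `x`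
    (n : ℕ) (hn : 1 ≤ n) (hidem : ∀ x : M, x ^ n * x ^ n = x ^ n)
    -- the equation holds for all pairs in `R`
    (h : ∀ s t : M, R s t → s ^ (n + 1) = s ^ n * t * s ^ n) :
    -- then it holds along any chain of `R`-pairs, i.e. for the
    -- reflexive-transitive closure of `R` (the saturated `C`-pairs)
    ∀ (s t : M) (m : ℕ) (r : ℕ → M), r 0 = s → r (m + 1) = t →
      (∀ i ≤ m, R (r i) (r (i + 1))) →
      s ^ (n + 1) = s ^ n * t * s ^ n := by
  -- key step lemma
  have step : ∀ s a b : M, s ^ (n + 1) = s ^ n * a * s ^ n → R a b →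
      s ^ (n + 1) = s ^ n * b * s ^ n := by
    intro s a b heq hab
    have hxn : (s ^ (n + 1)) ^ n = s ^ n := by
      rw [← pow_mul]
      have : (n + 1) * n = n * (n + 1) := by ring
      rw [this, pow_mul]
      exact idem_pow (hidem s) (n + 1) (by omega)
    have hxn1 : (s ^ (n + 1)) ^ (n + 1) = s ^ (n + 1) := by
      rw [pow_succ, hxn, pow_succ, ← mul_assoc, hidem]
    have hR : R (s ^ n * a * s ^ n) (s ^ n * b * s ^ n) :=
      hmult _ _ _ _ (hmult _ _ _ _ (hrefl (s ^ n)) hab) (hrefl (s ^ n))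
    have := h _ _ hR
    rw [← heq, hxn1, hxn] at this
    calc s ^ (n + 1) = s ^ n * (s ^ n * b * s ^ n) * s ^ n := this
      _ = (s ^ n * s ^ n) * b * (s ^ n * s ^ n) := by
          simp only [mul_assoc]
      _ = s ^ n * b * s ^ n := by rw [hidem]
  intro s t m r h0 h1 hchain
  subst h0 h1
  induction m with
  | zero => exact h _ _ (hchain 0 le_rfl)
  | succ m ih =>
    exact step _ _ _ (ih (fun i hi => hchain i (by omega)))
      (hchain (m + 1) le_rfl)
end
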